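/- arXiv:1712.05592 — 2 statements merged into one kernel-verified Lean document; each statement's English description precedes it below -/
import Mathlib

section
/- In the cyclotomic generalized Varagnolo–Vasserot algebra V^β_{λ,m}, the elements y_1,…,y_n are nilpotent. -/
/-!
Formalization of definitions from:
L. Poulain d'Andecy and R. Walker, "Affine Hecke algebras and generalisations
of quiver Hecke algebras for type B".

Presented algebras are realized as `RingQuot` quotients of free algebras.
-/

open scoped BigOperators Classical

noncomputable section

namespace PdAW

variable {K : Type} [Field K]

/-! ### The eigenvalue sets `I_λ` and `S` -/

/-- `I_λ = {λ^ε q^{2t} : ε ∈ {±1}, t ∈ ℤ}`. -/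
def Iset (q lam : K) : Set K :=
  {x | ∃ ε : ℤ, (ε = 1 ∨ ε = -1) ∧ ∃ t : ℤ, x = lam ^ ε * q ^ (2 * t)}

/-- `S = I_{λ_1} ∪ ⋯ ∪ I_{λ_l}`. -/
def Sset {l : ℕ} (q : K) (lam : Fin l → K) : Set K := ⋃ a, Iset q (lam a)

/-! ### The Weyl group action on tuples -/

variable {n : ℕ}

/-- The simple transposition exchanging the (0-based) entries `c` and `c+1`. -/
def swapMove (c : ℕ) (h : c + 1 < n) (i : Fin n → K) : Fin n → K :=
  i ∘ Equiv.swap ⟨c, Nat.lt_of_succ_lt h⟩ ⟨c + 1, h⟩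

/-- The reflection `r_0`, inverting the first entry. -/
def invMove (h : 0 < n) (i : Fin n → K) : Fin n → K :=
  Function.update i ⟨0, h⟩ (i ⟨0, h⟩)⁻¹

/-- One step of the symmetric-group action. -/
def AStep (i j : Fin n → K) : Prop := ∃ c, ∃ h : c + 1 < n, j = swapMove c h i

/-- One step of the type-B Weyl group action. -/
def BStep (i j : Fin n → K) : Prop := AStep i j ∨ ∃ h : 0 < n, j = invMove h i

/-- `j` lies in the `W(B_n)`-orbit of `i`. -/
def inOrbitB (i j : Fin n → K) : Prop := Relation.ReflTransGen BStep i j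

/-- `β` is an orbit for the action of `W(B_n)`. -/
def IsBOrbit (β : Set (Fin n → K)) : Prop := ∃ i₀ ∈ β, β = {j | inOrbitB i₀ j}

/-- `α` is a union of orbits for the symmetric group action (i.e. is closed under it). -/
def IsAClosed (α : Set (Fin n → K)) : Prop :=
  ∀ i ∈ α, ∀ c, ∀ h : c + 1 < n, swapMove c h i ∈ α

theorem fin_lt (c : Fin (n - 1)) : c.1 + 1 < n := by have := c.2; omega

/-- The 0-based position of the paper's index `b ∈ {1,…,n-1}` (namely `b-1`). -/
def lo (c : Fin (n - 1)) : Fin n := ⟨c.1, Nat.lt_of_succ_lt (fin_lt c)⟩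

/-- The 0-based position `b` for the paper's index `b ∈ {1,…,n-1}`. -/
def hi (c : Fin (n - 1)) : Fin n := ⟨c.1 + 1, fin_lt c⟩

/-- The action of the simple reflection `r_{c+1}` on tuples. -/
def sw (c : Fin (n - 1)) (i : Fin n → K) : Fin n → K := swapMove c.1 (fin_lt c) i

/-! ### Quiver arrows (for the quiver with arrows `i → q²i`) -/

/-- `i → j` : `j = q²i ≠ q⁻²i`. -/
def qarr (q i j : K) : Prop := j = q ^ 2 * i ∧ j ≠ (q ^ 2)⁻¹ * i

/-- `i ← j` : `j = q⁻²i ≠ q²i`. -/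
def qbak (q i j : K) : Prop := j = (q ^ 2)⁻¹ * i ∧ j ≠ q ^ 2 * i

/-- `i ↔ j` : `j = q²i = q⁻²i`. -/
def qdbl (q i j : K) : Prop := j = q ^ 2 * i ∧ j = (q ^ 2)⁻¹ * i

/-- `i ↮ j` : `i ≠ j` and `j ∉ {q²i, q⁻²i}`. -/
def qnon (q i j : K) : Prop := i ≠ j ∧ j ≠ q ^ 2 * i ∧ j ≠ (q ^ 2)⁻¹ * i

/-- `i⁻¹ →ᵖ i` : `i ∈ {±p}` and `i ∉ {±p⁻¹}`. -/
def parr (p i : K) : Prop := (i = p ∨ i = -p) ∧ ¬(i = p⁻¹ ∨ i = -p⁻¹)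

/-- `i⁻¹ ←ᵖ i` : `i ∉ {±p}` and `i ∈ {±p⁻¹}`. -/
def pbak (p i : K) : Prop := ¬(i = p ∨ i = -p) ∧ (i = p⁻¹ ∨ i = -p⁻¹)

/-- `i⁻¹ ↔ᵖ i` : `i ∈ {±p} ∩ {±p⁻¹}`. -/
def pdbl (p i : K) : Prop := (i = p ∨ i = -p) ∧ (i = p⁻¹ ∨ i = -p⁻¹)

/-- `i⁻¹ ↮ᵖ i` : `i ≠ i⁻¹` and `i ∉ {±p, ±p⁻¹}`. -/
def pnon (p i : K) : Prop := i ≠ i⁻¹ ∧ ¬(i = p ∨ i = -p ∨ i = p⁻¹ ∨ i = -p⁻¹)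

/-- The product `∏_{λ ∈ I} (x - λ)^{m(λ)}` (the factors pairwise commute). -/
def polyProd {A : Type} [Ring A] [Algebra K A] (x : A) (I : Finset K) (m : K → ℕ) : A :=
  I.noncommProd (fun lam => (x - algebraMap K A lam) ^ m lam) (by
    intro a _ b _ _
    have h1 : Commute x (algebraMap K A b) := (Algebra.commutes b x).symm
    have h2 : Commute (algebraMap K A a) x := Algebra.commutes a x
    have h3 : Commute (algebraMap K A a) (algebraMap K A b) := Algebra.commutes a _
    exact (((Commute.refl x).sub_right h1).sub_left (h2.sub_right h3)).pow_pow _ _)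

/-! ### The affine Hecke algebra of type A and its cyclotomic quotients -/

/-- Generators of the affine Hecke algebra `Ĥ(A_n)`:
`g c` is the paper's `g_{c+1}` (`c+1 ∈ {1,…,n-1}`), `X k` is `X_{k+1}`, `Xinv k` is `X_{k+1}⁻¹`. -/
inductive AGen (n : ℕ) : Type
  | g : Fin (n - 1) → AGen n
  | X : Fin n → AGen n
  | Xinv : Fin n → AGen n

def ag (c : Fin (n - 1)) : FreeAlgebra K (AGen n) := FreeAlgebra.ι K (AGen.g c)
def aX (k : Fin n) : FreeAlgebra K (AGen n) := FreeAlgebra.ι K (AGen.X k)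
def aXi (k : Fin n) : FreeAlgebra K (AGen n) := FreeAlgebra.ι K (AGen.Xinv k)

/-- Defining relations of the affine Hecke algebra `Ĥ(A_n)`. -/
inductive HARel (q : K) (n : ℕ) : FreeAlgebra K (AGen n) → FreeAlgebra K (AGen n) → Prop
  | quad (c : Fin (n - 1)) : HARel q n (ag c * ag c) ((q - q⁻¹) • ag c + 1)
  | braid (c c' : Fin (n - 1)) (h : c'.1 = c.1 + 1) :
      HARel q n (ag c * ag c' * ag c) (ag c' * ag c * ag c')
  | gcomm (c c' : Fin (n - 1)) (h : c.1 + 1 < c'.1) :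
      HARel q n (ag c * ag c') (ag c' * ag c)
  | Xcomm (k l : Fin n) : HARel q n (aX k * aX l) (aX l * aX k)
  | Xunit (k : Fin n) : HARel q n (aX k * aXi k) 1
  | Xunit' (k : Fin n) : HARel q n (aXi k * aX k) 1
  | gXg (c : Fin (n - 1)) : HARel q n (ag c * aX (lo c) * ag c) (aX (hi c))
  | gX (c : Fin (n - 1)) (k : Fin n) (h : k ≠ lo c ∧ k ≠ hi c) :
      HARel q n (ag c * aX k) (aX k * ag c)

/-- The affine Hecke algebra `Ĥ(A_n)`. -/
abbrev HeckeA (q : K) (n : ℕ) : Type := RingQuot (HARel q n)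

/-- Defining relations of the cyclotomic quotient `H(A_n)_{λ,m}`. -/
inductive HAcRel (q : K) (n : ℕ) (m : K →₀ ℕ) :
    FreeAlgebra K (AGen n) → FreeAlgebra K (AGen n) → Prop
  | ofA {a b : FreeAlgebra K (AGen n)} (h : HARel q n a b) : HAcRel q n m a b
  | cyc (h0 : 0 < n) : HAcRel q n m (polyProd (aX ⟨0, h0⟩) m.support ⇑m) 0

/-- The cyclotomic quotient `H(A_n)_{λ,m}`. -/
abbrev HeckeAc (q : K) (n : ℕ) (m : K →₀ ℕ) : Type := RingQuot (HAcRel q n m)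

/-! ### The affine Hecke algebra of type B and its cyclotomic quotients -/

inductive BGen (n : ℕ) : Type
  | g0 : BGen n
  | g : Fin (n - 1) → BGen n
  | X : Fin n → BGen n
  | Xinv : Fin n → BGen n

def bg0 : FreeAlgebra K (BGen n) := FreeAlgebra.ι K BGen.g0
def bg (c : Fin (n - 1)) : FreeAlgebra K (BGen n) := FreeAlgebra.ι K (BGen.g c)
def bX (k : Fin n) : FreeAlgebra K (BGen n) := FreeAlgebra.ι K (BGen.X k)
def bXi (k : Fin n) : FreeAlgebra K (BGen n) := FreeAlgebra.ι K (BGen.Xinv k)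

/-- Defining relations of the affine Hecke algebra `Ĥ(B_n)`. -/
inductive HBRel (p q : K) (n : ℕ) : FreeAlgebra K (BGen n) → FreeAlgebra K (BGen n) → Prop
  | quad0 : HBRel p q n (bg0 * bg0) ((p - p⁻¹) • bg0 + 1)
  | quad (c : Fin (n - 1)) : HBRel p q n (bg c * bg c) ((q - q⁻¹) • bg c + 1)
  | braid0 (h : 0 < n - 1) :
      HBRel p q n (bg0 * bg ⟨0, h⟩ * bg0 * bg ⟨0, h⟩) (bg ⟨0, h⟩ * bg0 * bg ⟨0, h⟩ * bg0)
  | braid (c c' : Fin (n - 1)) (h : c'.1 = c.1 + 1) :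
      HBRel p q n (bg c * bg c' * bg c) (bg c' * bg c * bg c')
  | gcomm (c c' : Fin (n - 1)) (h : c.1 + 1 < c'.1) :
      HBRel p q n (bg c * bg c') (bg c' * bg c)
  | g0comm (c : Fin (n - 1)) (h : 1 ≤ c.1) : HBRel p q n (bg0 * bg c) (bg c * bg0)
  | Xcomm (k l : Fin n) : HBRel p q n (bX k * bX l) (bX l * bX k)
  | Xunit (k : Fin n) : HBRel p q n (bX k * bXi k) 1
  | Xunit' (k : Fin n) : HBRel p q n (bXi k * bX k) 1
  | g0Xg0 (h0 : 0 < n) : HBRel p q n (bg0 * bXi ⟨0, h0⟩ * bg0) (bX ⟨0, h0⟩)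
  | gXg (c : Fin (n - 1)) : HBRel p q n (bg c * bX (lo c) * bg c) (bX (hi c))
  | gX (c : Fin (n - 1)) (k : Fin n) (h : k ≠ lo c ∧ k ≠ hi c) :
      HBRel p q n (bg c * bX k) (bX k * bg c)
  | g0X (k : Fin n) (h : k.1 ≠ 0) : HBRel p q n (bg0 * bX k) (bX k * bg0)

/-- The affine Hecke algebra `Ĥ(B_n)`. -/
abbrev HeckeB (p q : K) (n : ℕ) : Type := RingQuot (HBRel p q n)

/-- Defining relations of the cyclotomic quotient `H(B_n)_{λ,m}`. -/
inductive HBcRel (p q : K) (n : ℕ) (m : K →₀ ℕ) :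
    FreeAlgebra K (BGen n) → FreeAlgebra K (BGen n) → Prop
  | ofB {a b : FreeAlgebra K (BGen n)} (h : HBRel p q n a b) : HBcRel p q n m a b
  | cyc (h0 : 0 < n) : HBcRel p q n m (polyProd (bX ⟨0, h0⟩) m.support ⇑m) 0

/-- The cyclotomic quotient `H(B_n)_{λ,m}`. -/
abbrev HeckeBc (p q : K) (n : ℕ) (m : K →₀ ℕ) : Type := RingQuot (HBcRel p q n m)

/-! ### Spectral idempotent families and corner (block) algebras -/

/-- The characterizing properties of the family of idempotents `e^H(i)` projecting onto
the common generalized eigenspaces of commuting elements `Xs k` (acting by left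
multiplication): they are orthogonal idempotents summing to `1`, commuting with the
`Xs k`, with `(Xs k - i_k)` nilpotent on `E i`.  Such a family is unique. -/
def IsSpectralFamily {A : Type} [Ring A] [Algebra K A] (Xs : Fin n → A)
    (T : Finset (Fin n → K)) (E : (Fin n → K) → A) : Prop :=
  (∀ i, i ∉ T → E i = 0) ∧ (∑ i ∈ T, E i = 1) ∧
  (∀ i, E i * E i = E i) ∧ (∀ i j, i ≠ j → E i * E j = 0) ∧
  (∀ i k, Xs k * E i = E i * Xs k) ∧
  (∀ i ∈ T, ∀ k : Fin n, ∃ N : ℕ, 0 < N ∧ (Xs k - algebraMap K A (i k)) ^ N * E i = 0)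

/-- Relation identifying a central idempotent `e` with `1`. -/
def cornerRel {A : Type} [Ring A] (e : A) : A → A → Prop := fun x y => x = e ∧ y = 1

/-- For a central idempotent `e` of `A`, the corner algebra `eA` realized as the
quotient of `A` by the relation `e = 1`. -/
abbrev Corner (A : Type) [Ring A] (e : A) : Type := RingQuot (cornerRel e)

/-- Canonical algebra map `A → eA`. -/
def cornerMk {A : Type} [Ring A] [Algebra K A] (e : A) : A →ₐ[K] Corner A e :=
  RingQuot.mkAlgHom K (cornerRel e)

/-! ### Cyclotomic KLR algebras (type A quiver Hecke algebras) -/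

/-- Generators of the KLR algebra: `psi c` is the paper's `ψ_{c+1}`, `y k` is `y_{k+1}`,
`e i` for `i` in the index set `α`. -/
inductive RGen (K : Type) (n : ℕ) (α : Finset (Fin n → K)) : Type
  | psi : Fin (n - 1) → RGen K n α
  | y : Fin n → RGen K n α
  | e : {x // x ∈ α} → RGen K n α

def rψ {α : Finset (Fin n → K)} (c : Fin (n - 1)) : FreeAlgebra K (RGen K n α) :=
  FreeAlgebra.ι K (RGen.psi c)
def ry {α : Finset (Fin n → K)} (k : Fin n) : FreeAlgebra K (RGen K n α) :=
  FreeAlgebra.ι K (RGen.y k)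
def re {α : Finset (Fin n → K)} (i : {x // x ∈ α}) : FreeAlgebra K (RGen K n α) :=
  FreeAlgebra.ι K (RGen.e i)

/-- Defining relations of the cyclotomic KLR algebra `R^α_{λ,m}`. -/
inductive RRel (q : K) (n : ℕ) (α : Finset (Fin n → K)) (m : K →₀ ℕ) :
    FreeAlgebra K (RGen K n α) → FreeAlgebra K (RGen K n α) → Prop
  | esum : RRel q n α m (∑ i ∈ α.attach, re i) 1
  | eidem (i) : RRel q n α m (re i * re i) (re i)
  | eorth (i j) (h : i ≠ j) : RRel q n α m (re i * re j) 0
  | ycomm (k l : Fin n) : RRel q n α m (ry k * ry l) (ry l * ry k)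
  | ye (k : Fin n) (i) : RRel q n α m (ry k * re i) (re i * ry k)
  | psiE (c : Fin (n - 1)) (i : {x // x ∈ α}) (h' : sw c i.1 ∈ α) :
      RRel q n α m (rψ c * re i) (re ⟨sw c i.1, h'⟩ * rψ c)
  | psiyB (c : Fin (n - 1)) (i) (h : i.1 (lo c) = i.1 (hi c)) :
      RRel q n α m ((rψ c * ry (lo c) - ry (hi c) * rψ c) * re i) (-re i)
  | psiyB1 (c : Fin (n - 1)) (i) (h : i.1 (lo c) = i.1 (hi c)) :
      RRel q n α m ((rψ c * ry (hi c) - ry (lo c) * rψ c) * re i) (re i)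
  | psiyO (c : Fin (n - 1)) (i) (j : Fin n)
      (h : i.1 (lo c) ≠ i.1 (hi c) ∨ (j ≠ lo c ∧ j ≠ hi c)) :
      RRel q n α m ((rψ c * ry j - ry (Equiv.swap (lo c) (hi c) j) * rψ c) * re i) 0
  | psicomm (c c' : Fin (n - 1)) (h : c.1 + 1 < c'.1) :
      RRel q n α m (rψ c * rψ c') (rψ c' * rψ c)
  | sqEq (c : Fin (n - 1)) (i) (h : i.1 (lo c) = i.1 (hi c)) :
      RRel q n α m (rψ c * rψ c * re i) 0
  | sqNon (c : Fin (n - 1)) (i) (h : qnon q (i.1 (lo c)) (i.1 (hi c))) :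
      RRel q n α m (rψ c * rψ c * re i) (re i)
  | sqArr (c : Fin (n - 1)) (i) (h : qarr q (i.1 (lo c)) (i.1 (hi c))) :
      RRel q n α m (rψ c * rψ c * re i) ((ry (hi c) - ry (lo c)) * re i)
  | sqBak (c : Fin (n - 1)) (i) (h : qbak q (i.1 (lo c)) (i.1 (hi c))) :
      RRel q n α m (rψ c * rψ c * re i) ((ry (lo c) - ry (hi c)) * re i)
  | sqDbl (c : Fin (n - 1)) (i) (h : qdbl q (i.1 (lo c)) (i.1 (hi c))) :
      RRel q n α m (rψ c * rψ c * re i) ((ry (hi c) - ry (lo c)) * ((ry (lo c) - ry (hi c)) * re i))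
  | brArr (c c' : Fin (n - 1)) (hcc : c'.1 = c.1 + 1) (i) (h1 : i.1 (lo c) = i.1 (hi c'))
      (h2 : qarr q (i.1 (lo c)) (i.1 (hi c))) :
      RRel q n α m ((rψ c * rψ c' * rψ c - rψ c' * rψ c * rψ c') * re i) (re i)
  | brBak (c c' : Fin (n - 1)) (hcc : c'.1 = c.1 + 1) (i) (h1 : i.1 (lo c) = i.1 (hi c'))
      (h2 : qbak q (i.1 (lo c)) (i.1 (hi c))) :
      RRel q n α m ((rψ c * rψ c' * rψ c - rψ c' * rψ c * rψ c') * re i) (-re i)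
  | brDbl (c c' : Fin (n - 1)) (hcc : c'.1 = c.1 + 1) (i) (h1 : i.1 (lo c) = i.1 (hi c'))
      (h2 : qdbl q (i.1 (lo c)) (i.1 (hi c))) :
      RRel q n α m ((rψ c * rψ c' * rψ c - rψ c' * rψ c * rψ c') * re i)
        ((ry (hi c') + ry (lo c) - ry (hi c) - ry (hi c)) * re i)
  | brEls (c c' : Fin (n - 1)) (hcc : c'.1 = c.1 + 1) (i)
      (h : ¬(i.1 (lo c) = i.1 (hi c') ∧ (qarr q (i.1 (lo c)) (i.1 (hi c)) ∨
            qbak q (i.1 (lo c)) (i.1 (hi c)) ∨ qdbl q (i.1 (lo c)) (i.1 (hi c))))) :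
      RRel q n α m ((rψ c * rψ c' * rψ c - rψ c' * rψ c * rψ c') * re i) 0
  | cyc (i) (h0 : 0 < n) :
      RRel q n α m (ry ⟨0, h0⟩ ^ m (i.1 ⟨0, h0⟩) * re i) 0

/-- The cyclotomic KLR algebra `R^α_{λ,m}`. -/
abbrev KLR (q : K) (n : ℕ) (α : Finset (Fin n → K)) (m : K →₀ ℕ) : Type :=
  RingQuot (RRel q n α m)

/-! ### The generalized Varagnolo–Vasserot algebras `V^β_λ` and cyclotomic quotients -/

inductive VGen (K : Type) (n : ℕ) (β : Finset (Fin n → K)) : Type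
  | psi0 : VGen K n β
  | psi : Fin (n - 1) → VGen K n β
  | y : Fin n → VGen K n β
  | e : {x // x ∈ β} → VGen K n β

def vψ0 {β : Finset (Fin n → K)} : FreeAlgebra K (VGen K n β) := FreeAlgebra.ι K VGen.psi0
def vψ {β : Finset (Fin n → K)} (c : Fin (n - 1)) : FreeAlgebra K (VGen K n β) :=
  FreeAlgebra.ι K (VGen.psi c)
def vy {β : Finset (Fin n → K)} (k : Fin n) : FreeAlgebra K (VGen K n β) :=
  FreeAlgebra.ι K (VGen.y k)
def ve {β : Finset (Fin n → K)} (i : {x // x ∈ β}) : FreeAlgebra K (VGen K n β) :=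
  FreeAlgebra.ι K (VGen.e i)

/-- Case conditions appearing in the four-term relation (Rel:V11). -/
def c4a (q i1 i2 : K) : Prop := i1⁻¹ ≠ i1 ∧ qarr q i1 i2 ∧ i2⁻¹ = i2
def c4b (q i1 i2 : K) : Prop := i1⁻¹ ≠ i1 ∧ qbak q i1 i2 ∧ i2⁻¹ = i2
def c4c (q i1 i2 : K) : Prop := i1⁻¹ = i1 ∧ qdbl q i1 i2 ∧ i2⁻¹ = i2
def c4d (p i1 i2 : K) : Prop := i2 ≠ i1 ∧ pbak p i1⁻¹ ∧ i1⁻¹ = i2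
def c4e (p i1 i2 : K) : Prop := i2 ≠ i1 ∧ parr p i1⁻¹ ∧ i1⁻¹ = i2
def c4f (p i1 i2 : K) : Prop := i2 ≠ i1 ∧ pdbl p i1⁻¹ ∧ i1⁻¹ = i2

/-- `((ψ_0ψ_1)² - (ψ_1ψ_0)²) e(i)`. -/
def vfour {β : Finset (Fin n → K)} (h2 : 1 < n) (i : {x // x ∈ β}) :
    FreeAlgebra K (VGen K n β) :=
  (vψ0 * vψ ⟨0, by omega⟩ * vψ0 * vψ ⟨0, by omega⟩ -
    vψ ⟨0, by omega⟩ * vψ0 * vψ ⟨0, by omega⟩ * vψ0) * ve i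

/-- Defining relations of the cyclotomic quotient `V^β_{λ,m}` of the generalized
Varagnolo–Vasserot algebra (Definition 2.1 of the paper, plus the cyclotomic relation). -/
inductive VRel (p q : K) (n : ℕ) (β : Finset (Fin n → K)) (m : K →₀ ℕ) :
    FreeAlgebra K (VGen K n β) → FreeAlgebra K (VGen K n β) → Prop
  | esum : VRel p q n β m (∑ i ∈ β.attach, ve i) 1
  | eidem (i) : VRel p q n β m (ve i * ve i) (ve i)
  | eorth (i j) (h : i ≠ j) : VRel p q n β m (ve i * ve j) 0
  | ycomm (k l : Fin n) : VRel p q n β m (vy k * vy l) (vy l * vy k)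
  | ye (k : Fin n) (i) : VRel p q n β m (vy k * ve i) (ve i * vy k)
  | psiE (c : Fin (n - 1)) (i : {x // x ∈ β}) (h' : sw c i.1 ∈ β) :
      VRel p q n β m (vψ c * ve i) (ve ⟨sw c i.1, h'⟩ * vψ c)
  | psi0E (i : {x // x ∈ β}) (h0 : 0 < n) (h' : invMove h0 i.1 ∈ β) :
      VRel p q n β m (vψ0 * ve i) (ve ⟨invMove h0 i.1, h'⟩ * vψ0)
  | psiyB (c : Fin (n - 1)) (i) (h : i.1 (lo c) = i.1 (hi c)) :
      VRel p q n β m ((vψ c * vy (lo c) - vy (hi c) * vψ c) * ve i) (-ve i)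
  | psiyB1 (c : Fin (n - 1)) (i) (h : i.1 (lo c) = i.1 (hi c)) :
      VRel p q n β m ((vψ c * vy (hi c) - vy (lo c) * vψ c) * ve i) (ve i)
  | psiyO (c : Fin (n - 1)) (i) (j : Fin n)
      (h : i.1 (lo c) ≠ i.1 (hi c) ∨ (j ≠ lo c ∧ j ≠ hi c)) :
      VRel p q n β m ((vψ c * vy j - vy (Equiv.swap (lo c) (hi c) j) * vψ c) * ve i) 0
  | psicomm (c c' : Fin (n - 1)) (h : c.1 + 1 < c'.1) :
      VRel p q n β m (vψ c * vψ c') (vψ c' * vψ c)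
  | psicomm0 (c : Fin (n - 1)) (h : 1 ≤ c.1) : VRel p q n β m (vψ0 * vψ c) (vψ c * vψ0)
  | sqEq (c : Fin (n - 1)) (i) (h : i.1 (lo c) = i.1 (hi c)) :
      VRel p q n β m (vψ c * vψ c * ve i) 0
  | sqNon (c : Fin (n - 1)) (i) (h : qnon q (i.1 (lo c)) (i.1 (hi c))) :
      VRel p q n β m (vψ c * vψ c * ve i) (ve i)
  | sqArr (c : Fin (n - 1)) (i) (h : qarr q (i.1 (lo c)) (i.1 (hi c))) :
      VRel p q n β m (vψ c * vψ c * ve i) ((vy (hi c) - vy (lo c)) * ve i)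
  | sqBak (c : Fin (n - 1)) (i) (h : qbak q (i.1 (lo c)) (i.1 (hi c))) :
      VRel p q n β m (vψ c * vψ c * ve i) ((vy (lo c) - vy (hi c)) * ve i)
  | sqDbl (c : Fin (n - 1)) (i) (h : qdbl q (i.1 (lo c)) (i.1 (hi c))) :
      VRel p q n β m (vψ c * vψ c * ve i) ((vy (hi c) - vy (lo c)) * ((vy (lo c) - vy (hi c)) * ve i))
  | brArr (c c' : Fin (n - 1)) (hcc : c'.1 = c.1 + 1) (i) (h1 : i.1 (lo c) = i.1 (hi c'))
      (h2 : qarr q (i.1 (lo c)) (i.1 (hi c))) :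
      VRel p q n β m ((vψ c * vψ c' * vψ c - vψ c' * vψ c * vψ c') * ve i) (ve i)
  | brBak (c c' : Fin (n - 1)) (hcc : c'.1 = c.1 + 1) (i) (h1 : i.1 (lo c) = i.1 (hi c'))
      (h2 : qbak q (i.1 (lo c)) (i.1 (hi c))) :
      VRel p q n β m ((vψ c * vψ c' * vψ c - vψ c' * vψ c * vψ c') * ve i) (-ve i)
  | brDbl (c c' : Fin (n - 1)) (hcc : c'.1 = c.1 + 1) (i) (h1 : i.1 (lo c) = i.1 (hi c'))
      (h2 : qdbl q (i.1 (lo c)) (i.1 (hi c))) :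
      VRel p q n β m ((vψ c * vψ c' * vψ c - vψ c' * vψ c * vψ c') * ve i)
        ((vy (hi c') + vy (lo c) - vy (hi c) - vy (hi c)) * ve i)
  | brEls (c c' : Fin (n - 1)) (hcc : c'.1 = c.1 + 1) (i)
      (h : ¬(i.1 (lo c) = i.1 (hi c') ∧ (qarr q (i.1 (lo c)) (i.1 (hi c)) ∨
            qbak q (i.1 (lo c)) (i.1 (hi c)) ∨ qdbl q (i.1 (lo c)) (i.1 (hi c))))) :
      VRel p q n β m ((vψ c * vψ c' * vψ c - vψ c' * vψ c * vψ c') * ve i) 0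
  | psi0yNe (i) (h0 : 0 < n) (h : (i.1 ⟨0, h0⟩)⁻¹ ≠ i.1 ⟨0, h0⟩) :
      VRel p q n β m ((vψ0 * vy ⟨0, h0⟩ + vy ⟨0, h0⟩ * vψ0) * ve i) 0
  | psi0yEq (i) (h0 : 0 < n) (h : (i.1 ⟨0, h0⟩)⁻¹ = i.1 ⟨0, h0⟩) :
      VRel p q n β m ((vψ0 * vy ⟨0, h0⟩ + vy ⟨0, h0⟩ * vψ0) * ve i) (ve i + ve i)
  | psi0yO (k : Fin n) (h : k.1 ≠ 0) : VRel p q n β m (vψ0 * vy k) (vy k * vψ0)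
  | sq0Eq (i) (h0 : 0 < n) (h : (i.1 ⟨0, h0⟩)⁻¹ = i.1 ⟨0, h0⟩) :
      VRel p q n β m (vψ0 * vψ0 * ve i) 0
  | sq0Non (i) (h0 : 0 < n) (h : pnon p (i.1 ⟨0, h0⟩)) :
      VRel p q n β m (vψ0 * vψ0 * ve i) (ve i)
  | sq0Arr (i) (h0 : 0 < n) (h : parr p (i.1 ⟨0, h0⟩)) :
      VRel p q n β m (vψ0 * vψ0 * ve i) (vy ⟨0, h0⟩ * ve i)
  | sq0Bak (i) (h0 : 0 < n) (h : pbak p (i.1 ⟨0, h0⟩)) :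
      VRel p q n β m (vψ0 * vψ0 * ve i) (-(vy ⟨0, h0⟩ * ve i))
  | sq0Dbl (i) (h0 : 0 < n) (h : pdbl p (i.1 ⟨0, h0⟩)) :
      VRel p q n β m (vψ0 * vψ0 * ve i) (-(vy ⟨0, h0⟩ * (vy ⟨0, h0⟩ * ve i)))
  | fourA (i) (h2 : 1 < n) (h : c4a q (i.1 ⟨0, Nat.lt_of_succ_lt h2⟩) (i.1 ⟨1, h2⟩)) :
      VRel p q n β m (vfour h2 i) ((2 : K) • (vψ0 * ve i))
  | fourB (i) (h2 : 1 < n) (h : c4b q (i.1 ⟨0, Nat.lt_of_succ_lt h2⟩) (i.1 ⟨1, h2⟩)) :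
      VRel p q n β m (vfour h2 i) (-((2 : K) • (vψ0 * ve i)))
  | fourC (i) (h2 : 1 < n) (h : c4c q (i.1 ⟨0, Nat.lt_of_succ_lt h2⟩) (i.1 ⟨1, h2⟩)) :
      VRel p q n β m (vfour h2 i) ((4 : K) • ((vψ0 * vy ⟨0, Nat.lt_of_succ_lt h2⟩ - 1) * ve i))
  | fourD (i) (h2 : 1 < n) (h : c4d p (i.1 ⟨0, Nat.lt_of_succ_lt h2⟩) (i.1 ⟨1, h2⟩)) :
      VRel p q n β m (vfour h2 i) (-(vψ ⟨0, by omega⟩ * ve i))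
  | fourE (i) (h2 : 1 < n) (h : c4e p (i.1 ⟨0, Nat.lt_of_succ_lt h2⟩) (i.1 ⟨1, h2⟩)) :
      VRel p q n β m (vfour h2 i) (vψ ⟨0, by omega⟩ * ve i)
  | fourF (i) (h2 : 1 < n) (h : c4f p (i.1 ⟨0, Nat.lt_of_succ_lt h2⟩) (i.1 ⟨1, h2⟩)) :
      VRel p q n β m (vfour h2 i)
        (vψ ⟨0, by omega⟩ * ((vy ⟨0, Nat.lt_of_succ_lt h2⟩ - vy ⟨1, h2⟩) * ve i))
  | fourG (i) (h2 : 1 < n)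
      (h : ¬c4a q (i.1 ⟨0, Nat.lt_of_succ_lt h2⟩) (i.1 ⟨1, h2⟩) ∧
           ¬c4b q (i.1 ⟨0, Nat.lt_of_succ_lt h2⟩) (i.1 ⟨1, h2⟩) ∧
           ¬c4c q (i.1 ⟨0, Nat.lt_of_succ_lt h2⟩) (i.1 ⟨1, h2⟩) ∧
           ¬c4d p (i.1 ⟨0, Nat.lt_of_succ_lt h2⟩) (i.1 ⟨1, h2⟩) ∧
           ¬c4e p (i.1 ⟨0, Nat.lt_of_succ_lt h2⟩) (i.1 ⟨1, h2⟩) ∧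
           ¬c4f p (i.1 ⟨0, Nat.lt_of_succ_lt h2⟩) (i.1 ⟨1, h2⟩)) :
      VRel p q n β m (vfour h2 i) 0
  | cyc (i) (h0 : 0 < n) :
      VRel p q n β m (vy ⟨0, h0⟩ ^ m (i.1 ⟨0, h0⟩) * ve i) 0

/-- The cyclotomic quotient `V^β_{λ,m}` of the generalized Varagnolo–Vasserot algebra. -/
abbrev VB (p q : K) (n : ℕ) (β : Finset (Fin n → K)) (m : K →₀ ℕ) : Type :=
  RingQuot (VRel p q n β m)

/-! ### Laurent monomials and the intermediary algebras `𝕀_{N,A}` and `𝕀_N` -/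

/-- Given elements `X k` with formal inverses `Xi k`, the monomial `X^x` for `x ∈ ℤ^n`. -/
def XmonOf {F : Type} [Monoid F] (X Xi : Fin n → F) (x : Fin n → ℤ) : F :=
  ((List.finRange n).map fun k => if 0 ≤ x k then X k ^ (x k).toNat
    else Xi k ^ (-x k).toNat).prod

/-- The Laurent polynomial `(X^x - X^{x - tα})/(1 - X^{-α})` (a geometric sum). -/
def divMonOf {F : Type} [Ring F] (X Xi : Fin n → F) (x αv : Fin n → ℤ) (t : ℤ) : F :=
  if 0 ≤ t then ∑ j ∈ Finset.range t.toNat, XmonOf X Xi (x - (j : ℤ) • αv)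
  else -∑ j ∈ Finset.range (-t).toNat, XmonOf X Xi (x + ((j : ℤ) + 1) • αv)

/-- The root `α_b = ε_{b+1} - ε_b` as an exponent vector. -/
def alC (c : Fin (n - 1)) : Fin n → ℤ := fun k => if k = hi c then 1 else if k = lo c then -1 else 0

/-- The root `α_0 = 2ε_1` as an exponent vector. -/
def alB : Fin n → ℤ := fun k => if k.1 = 0 then 2 else 0

/-- Action of `r_0` on exponent vectors. -/
def rx0 (x : Fin n → ℤ) : Fin n → ℤ := fun k => if k.1 = 0 then -x k else x k

/-- Action of the simple transposition `r_{c+1}` on exponent vectors. -/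
def rxC (c : Fin (n - 1)) (x : Fin n → ℤ) : Fin n → ℤ := x ∘ Equiv.swap (lo c) (hi c)

/-- `-α_1` as an exponent vector (so `X^{-α_1} = X_1X_2⁻¹`). -/
def mA1 : Fin n → ℤ := fun k => if k.1 = 0 then 1 else if k.1 = 1 then -1 else 0
/-- `-r_0(α_1)` as an exponent vector (so `X^{-r_0(α_1)} = X_1⁻¹X_2⁻¹`). -/
def mR0A1 : Fin n → ℤ := fun k => if k.1 = 0 then -1 else if k.1 = 1 then -1 else 0
/-- `-r_1(α_0)` as an exponent vector (so `X^{-r_1(α_0)} = X_2⁻²`). -/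
def mR1A0 : Fin n → ℤ := fun k => if k.1 = 1 then -2 else 0
/-- `-α_0` as an exponent vector (so `X^{-α_0} = X_1⁻²`). -/
def mA0 : Fin n → ℤ := fun k => if k.1 = 0 then -2 else 0

/-- Generators of the intermediary algebra `𝕀_{N,A}` of Section 5 (restricted to type A). -/
inductive IAGen (K : Type) (n : ℕ) (α : Finset (Fin n → K)) : Type
  | phi : Fin (n - 1) → IAGen K n α
  | X : Fin n → IAGen K n α
  | Xinv : Fin n → IAGen K n α
  | e : {x // x ∈ α} → IAGen K n α

def tφ {α : Finset (Fin n → K)} (c : Fin (n - 1)) : FreeAlgebra K (IAGen K n α) :=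
  FreeAlgebra.ι K (IAGen.phi c)
def tX {α : Finset (Fin n → K)} (k : Fin n) : FreeAlgebra K (IAGen K n α) :=
  FreeAlgebra.ι K (IAGen.X k)
def tXi {α : Finset (Fin n → K)} (k : Fin n) : FreeAlgebra K (IAGen K n α) :=
  FreeAlgebra.ι K (IAGen.Xinv k)
def te {α : Finset (Fin n → K)} (i : {x // x ∈ α}) : FreeAlgebra K (IAGen K n α) :=
  FreeAlgebra.ι K (IAGen.e i)

/-- The "commutative part" of the relations of `𝕀_{N,A}`: relations among the `X`'s and
the idempotents `e(i)`, including the cyclotomic relation `(X_1 - i_1)^{m(i_1)}e(i) = 0`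
and the nilpotency relations `(X_k - i_k)^N e(i) = 0` for `k ≥ 2`. -/
inductive XARel (n : ℕ) (α : Finset (Fin n → K)) (m : K →₀ ℕ) (N : ℕ) :
    FreeAlgebra K (IAGen K n α) → FreeAlgebra K (IAGen K n α) → Prop
  | Xcomm (k l : Fin n) : XARel n α m N (tX k * tX l) (tX l * tX k)
  | Xunit (k : Fin n) : XARel n α m N (tX k * tXi k) 1
  | Xunit' (k : Fin n) : XARel n α m N (tXi k * tX k) 1
  | esum : XARel n α m N (∑ i ∈ α.attach, te i) 1
  | eidem (i) : XARel n α m N (te i * te i) (te i)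
  | eorth (i j) (h : i ≠ j) : XARel n α m N (te i * te j) 0
  | Xe (k : Fin n) (i) : XARel n α m N (tX k * te i) (te i * tX k)
  | cyc (i) (h0 : 0 < n) :
      XARel n α m N ((tX ⟨0, h0⟩ - algebraMap K (FreeAlgebra K (IAGen K n α)) (i.1 ⟨0, h0⟩)) ^
        m (i.1 ⟨0, h0⟩) * te i) 0
  | nil (i) (k : Fin n) (h : k.1 ≠ 0) :
      XARel n α m N ((tX k - algebraMap K (FreeAlgebra K (IAGen K n α)) (i.1 k)) ^ N * te i) 0

/-- Defining relations of the intermediary algebra `𝕀_{N,A}`.  Partial inverses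
`(⋯)⁻¹e(i)` appearing in the relations of Definition 5.1 are handled by quantifying over
all elements `Z` which invert the relevant denominator `e(i)`-locally, modulo the
commutative relations `XARel` (such a `Z` exists and its class is unique, by the
nilpotency relations). -/
inductive IARel (q : K) (n : ℕ) (α : Finset (Fin n → K)) (m : K →₀ ℕ) (N : ℕ) :
    FreeAlgebra K (IAGen K n α) → FreeAlgebra K (IAGen K n α) → Prop
  | ofX {a b : FreeAlgebra K (IAGen K n α)} (h : XARel n α m N a b) : IARel q n α m N a b
  | phiE (c : Fin (n - 1)) (i : {x // x ∈ α}) (h' : sw c i.1 ∈ α) :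
      IARel q n α m N (tφ c * te i) (te ⟨sw c i.1, h'⟩ * tφ c)
  | phiXne (c : Fin (n - 1)) (i) (x : Fin n → ℤ) (h : i.1 (lo c) ≠ i.1 (hi c)) :
      IARel q n α m N ((tφ c * XmonOf tX tXi x - XmonOf tX tXi (rxC c x) * tφ c) * te i) 0
  | phiXeq (c : Fin (n - 1)) (i) (x : Fin n → ℤ) (h : i.1 (lo c) = i.1 (hi c)) :
      IARel q n α m N ((tφ c * XmonOf tX tXi x - XmonOf tX tXi (rxC c x) * tφ c) * te i)
        ((q • (1 : FreeAlgebra K (IAGen K n α)) - q⁻¹ • XmonOf tX tXi (-alC c)) *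
          (divMonOf tX tXi x (alC c) (x (hi c) - x (lo c)) * te i))
  | phicomm (c c' : Fin (n - 1)) (h : c.1 + 1 < c'.1) :
      IARel q n α m N (tφ c * tφ c') (tφ c' * tφ c)
  | phisqEq (c : Fin (n - 1)) (i) (h : i.1 (lo c) = i.1 (hi c)) :
      IARel q n α m N (tφ c * tφ c * te i) ((q + q⁻¹) • (tφ c * te i))
  | phisqNe (c : Fin (n - 1)) (i) (h : i.1 (lo c) ≠ i.1 (hi c))
      (Z : FreeAlgebra K (IAGen K n α))
      (hZ : RingQuot.mkAlgHom K (XARel n α m N)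
          ((1 - XmonOf tX tXi (alC c)) * ((1 - XmonOf tX tXi (-alC c)) * (Z * te i))) =
        RingQuot.mkAlgHom K (XARel n α m N) (te i)) :
      IARel q n α m N (tφ c * tφ c * te i) (te i + ((q - q⁻¹) ^ 2) • (Z * te i))
  | phibrEq (c c' : Fin (n - 1)) (hcc : c'.1 = c.1 + 1) (i)
      (h1 : i.1 (lo c) = i.1 (hi c)) (h2 : i.1 (hi c) = i.1 (hi c')) :
      IARel q n α m N ((tφ c * tφ c' * tφ c - tφ c' * tφ c * tφ c') * te i)
        ((tφ c - tφ c') * te i)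
  | phibrNe (c c' : Fin (n - 1)) (hcc : c'.1 = c.1 + 1) (i)
      (h1 : i.1 (lo c) = i.1 (hi c')) (h2 : i.1 (lo c) ≠ i.1 (hi c))
      (Z : FreeAlgebra K (IAGen K n α))
      (hZ : RingQuot.mkAlgHom K (XARel n α m N)
          ((1 - XmonOf tX tXi (-alC c)) ^ 2 * ((1 - XmonOf tX tXi (-alC c')) ^ 2 * (Z * te i))) =
        RingQuot.mkAlgHom K (XARel n α m N) (te i)) :
      IARel q n α m N ((tφ c * tφ c' * tφ c - tφ c' * tφ c * tφ c') * te i)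
        (((q - q⁻¹) ^ 2) • ((XmonOf tX tXi (-alC c') - XmonOf tX tXi (-alC c)) *
          ((q • (1 : FreeAlgebra K (IAGen K n α)) - q⁻¹ • XmonOf tX tXi (-alC c - alC c')) *
            (Z * te i))))
  | phibrEls (c c' : Fin (n - 1)) (hcc : c'.1 = c.1 + 1) (i) (h : i.1 (lo c) ≠ i.1 (hi c')) :
      IARel q n α m N ((tφ c * tφ c' * tφ c - tφ c' * tφ c * tφ c') * te i) 0

/-- The intermediary algebra `𝕀_{N,A}`. -/
abbrev IA (q : K) (n : ℕ) (α : Finset (Fin n → K)) (m : K →₀ ℕ) (N : ℕ) : Type :=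
  RingQuot (IARel q n α m N)

/-- Generators of the intermediary algebra `𝕀_N` of Definition 5.1. -/
inductive IBGen (K : Type) (n : ℕ) (β : Finset (Fin n → K)) : Type
  | phi0 : IBGen K n β
  | phi : Fin (n - 1) → IBGen K n β
  | X : Fin n → IBGen K n β
  | Xinv : Fin n → IBGen K n β
  | e : {x // x ∈ β} → IBGen K n β

def uφ0 {β : Finset (Fin n → K)} : FreeAlgebra K (IBGen K n β) := FreeAlgebra.ι K IBGen.phi0
def uφ {β : Finset (Fin n → K)} (c : Fin (n - 1)) : FreeAlgebra K (IBGen K n β) :=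
  FreeAlgebra.ι K (IBGen.phi c)
def uX {β : Finset (Fin n → K)} (k : Fin n) : FreeAlgebra K (IBGen K n β) :=
  FreeAlgebra.ι K (IBGen.X k)
def uXi {β : Finset (Fin n → K)} (k : Fin n) : FreeAlgebra K (IBGen K n β) :=
  FreeAlgebra.ι K (IBGen.Xinv k)
def ue {β : Finset (Fin n → K)} (i : {x // x ∈ β}) : FreeAlgebra K (IBGen K n β) :=
  FreeAlgebra.ι K (IBGen.e i)

/-- The "commutative part" of the relations of `𝕀_N`. -/
inductive XBRel (n : ℕ) (β : Finset (Fin n → K)) (m : K →₀ ℕ) (N : ℕ) :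
    FreeAlgebra K (IBGen K n β) → FreeAlgebra K (IBGen K n β) → Prop
  | Xcomm (k l : Fin n) : XBRel n β m N (uX k * uX l) (uX l * uX k)
  | Xunit (k : Fin n) : XBRel n β m N (uX k * uXi k) 1
  | Xunit' (k : Fin n) : XBRel n β m N (uXi k * uX k) 1
  | esum : XBRel n β m N (∑ i ∈ β.attach, ue i) 1
  | eidem (i) : XBRel n β m N (ue i * ue i) (ue i)
  | eorth (i j) (h : i ≠ j) : XBRel n β m N (ue i * ue j) 0
  | Xe (k : Fin n) (i) : XBRel n β m N (uX k * ue i) (ue i * uX k)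
  | cyc (i) (h0 : 0 < n) :
      XBRel n β m N ((uX ⟨0, h0⟩ - algebraMap K (FreeAlgebra K (IBGen K n β)) (i.1 ⟨0, h0⟩)) ^
        m (i.1 ⟨0, h0⟩) * ue i) 0
  | nil (i) (k : Fin n) (h : k.1 ≠ 0) :
      XBRel n β m N ((uX k - algebraMap K (FreeAlgebra K (IBGen K n β)) (i.1 k)) ^ N * ue i) 0

/-- Case conditions for the modified four-term braid relation of Definition 5.1. -/
def ib4c1 (i1 i2 : K) : Prop := i1 = i2 ∧ i1 ^ 2 = 1 ∧ i2 ^ 2 = 1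
def ib4c2 (i1 i2 : K) : Prop := i1 ≠ i2 ∧ i1 ^ 2 = 1 ∧ i2 ^ 2 = 1
def ib4c3 (i1 i2 : K) : Prop := i1 ≠ i2 ∧ i1 ^ 2 ≠ 1 ∧ i2 ^ 2 = 1
def ib4c4 (i1 i2 : K) : Prop := i1 ≠ i2 ∧ i1 ^ 2 ≠ 1 ∧ i1⁻¹ = i2

/-- `(Φ_0Φ_1Φ_0Φ_1 - Φ_1Φ_0Φ_1Φ_0) e(i)`. -/
def ufour {β : Finset (Fin n → K)} (h2 : 1 < n) (i : {x // x ∈ β}) :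
    FreeAlgebra K (IBGen K n β) :=
  (uφ0 * uφ ⟨0, by omega⟩ * uφ0 * uφ ⟨0, by omega⟩ -
    uφ ⟨0, by omega⟩ * uφ0 * uφ ⟨0, by omega⟩ * uφ0) * ue i

/-- Defining relations of the intermediary algebra `𝕀_N` (Definition 5.1).  Partial
inverses `(⋯)⁻¹e(i)` are handled by quantifying over all local inverses `Z` modulo the
commutative relations `XBRel`; for the elements `Z_b`, `Y_0`, `Y_1` we use the
cancelled expressions (Z-Y) of Remark 5.3. -/
inductive IBRel (p q : K) (n : ℕ) (β : Finset (Fin n → K)) (m : K →₀ ℕ) (N : ℕ) :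
    FreeAlgebra K (IBGen K n β) → FreeAlgebra K (IBGen K n β) → Prop
  | ofX {a b : FreeAlgebra K (IBGen K n β)} (h : XBRel n β m N a b) : IBRel p q n β m N a b
  | phiE (c : Fin (n - 1)) (i : {x // x ∈ β}) (h' : sw c i.1 ∈ β) :
      IBRel p q n β m N (uφ c * ue i) (ue ⟨sw c i.1, h'⟩ * uφ c)
  | phi0E (i : {x // x ∈ β}) (h0 : 0 < n) (h' : invMove h0 i.1 ∈ β) :
      IBRel p q n β m N (uφ0 * ue i) (ue ⟨invMove h0 i.1, h'⟩ * uφ0)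
  | phiXne (c : Fin (n - 1)) (i) (x : Fin n → ℤ) (h : i.1 (lo c) ≠ i.1 (hi c)) :
      IBRel p q n β m N ((uφ c * XmonOf uX uXi x - XmonOf uX uXi (rxC c x) * uφ c) * ue i) 0
  | phiXeq (c : Fin (n - 1)) (i) (x : Fin n → ℤ) (h : i.1 (lo c) = i.1 (hi c)) :
      IBRel p q n β m N ((uφ c * XmonOf uX uXi x - XmonOf uX uXi (rxC c x) * uφ c) * ue i)
        ((q • (1 : FreeAlgebra K (IBGen K n β)) - q⁻¹ • XmonOf uX uXi (-alC c)) *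
          (divMonOf uX uXi x (alC c) (x (hi c) - x (lo c)) * ue i))
  | phi0Xne (i) (x : Fin n → ℤ) (h0 : 0 < n) (h : (i.1 ⟨0, h0⟩)⁻¹ ≠ i.1 ⟨0, h0⟩) :
      IBRel p q n β m N ((uφ0 * XmonOf uX uXi x - XmonOf uX uXi (rx0 x) * uφ0) * ue i) 0
  | phi0Xeq (i) (x : Fin n → ℤ) (h0 : 0 < n) (h : (i.1 ⟨0, h0⟩)⁻¹ = i.1 ⟨0, h0⟩) :
      IBRel p q n β m N ((uφ0 * XmonOf uX uXi x - XmonOf uX uXi (rx0 x) * uφ0) * ue i)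
        ((p • (1 : FreeAlgebra K (IBGen K n β)) - p⁻¹ • XmonOf uX uXi mA0) *
          (divMonOf uX uXi x alB (x ⟨0, h0⟩) * ue i))
  | phicomm (c c' : Fin (n - 1)) (h : c.1 + 1 < c'.1) :
      IBRel p q n β m N (uφ c * uφ c') (uφ c' * uφ c)
  | phi0comm (c : Fin (n - 1)) (h : 1 ≤ c.1) : IBRel p q n β m N (uφ0 * uφ c) (uφ c * uφ0)
  | phisqEq (c : Fin (n - 1)) (i) (h : i.1 (lo c) = i.1 (hi c)) :
      IBRel p q n β m N (uφ c * uφ c * ue i) ((q + q⁻¹) • (uφ c * ue i))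
  | phisqNe (c : Fin (n - 1)) (i) (h : i.1 (lo c) ≠ i.1 (hi c))
      (Z : FreeAlgebra K (IBGen K n β))
      (hZ : RingQuot.mkAlgHom K (XBRel n β m N)
          ((1 - XmonOf uX uXi (alC c)) * ((1 - XmonOf uX uXi (-alC c)) * (Z * ue i))) =
        RingQuot.mkAlgHom K (XBRel n β m N) (ue i)) :
      IBRel p q n β m N (uφ c * uφ c * ue i)
        ((q • (1 : FreeAlgebra K (IBGen K n β)) - q⁻¹ • XmonOf uX uXi (alC c)) *
          ((q • (1 : FreeAlgebra K (IBGen K n β)) - q⁻¹ • XmonOf uX uXi (-alC c)) *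
            (Z * ue i)))
  | phi0sqEq (i) (h0 : 0 < n) (h : (i.1 ⟨0, h0⟩)⁻¹ = i.1 ⟨0, h0⟩) :
      IBRel p q n β m N (uφ0 * uφ0 * ue i) ((p + p⁻¹) • (uφ0 * ue i))
  | phi0sqNe (i) (h0 : 0 < n) (h : (i.1 ⟨0, h0⟩)⁻¹ ≠ i.1 ⟨0, h0⟩)
      (Z : FreeAlgebra K (IBGen K n β))
      (hZ : RingQuot.mkAlgHom K (XBRel n β m N)
          ((1 - XmonOf uX uXi alB) * ((1 - XmonOf uX uXi mA0) * (Z * ue i))) =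
        RingQuot.mkAlgHom K (XBRel n β m N) (ue i)) :
      IBRel p q n β m N (uφ0 * uφ0 * ue i)
        ((p • (1 : FreeAlgebra K (IBGen K n β)) - p⁻¹ • XmonOf uX uXi alB) *
          ((p • (1 : FreeAlgebra K (IBGen K n β)) - p⁻¹ • XmonOf uX uXi mA0) *
            (Z * ue i)))
  | phibrEq (c c' : Fin (n - 1)) (hcc : c'.1 = c.1 + 1) (i)
      (h1 : i.1 (lo c) = i.1 (hi c)) (h2 : i.1 (hi c) = i.1 (hi c')) :
      IBRel p q n β m N ((uφ c * uφ c' * uφ c - uφ c' * uφ c * uφ c') * ue i)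
        ((uφ c - uφ c') * ue i)
  | phibrNe (c c' : Fin (n - 1)) (hcc : c'.1 = c.1 + 1) (i)
      (h1 : i.1 (lo c) = i.1 (hi c')) (h2 : i.1 (lo c) ≠ i.1 (hi c))
      (Z : FreeAlgebra K (IBGen K n β))
      (hZ : RingQuot.mkAlgHom K (XBRel n β m N)
          ((1 - XmonOf uX uXi (-alC c)) ^ 2 * ((1 - XmonOf uX uXi (-alC c')) ^ 2 * (Z * ue i))) =
        RingQuot.mkAlgHom K (XBRel n β m N) (ue i)) :
      IBRel p q n β m N ((uφ c * uφ c' * uφ c - uφ c' * uφ c * uφ c') * ue i)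
        (((q - q⁻¹) ^ 2) • ((XmonOf uX uXi (-alC c') - XmonOf uX uXi (-alC c)) *
          ((q • (1 : FreeAlgebra K (IBGen K n β)) - q⁻¹ • XmonOf uX uXi (-alC c - alC c')) *
            (Z * ue i))))
  | phibrEls (c c' : Fin (n - 1)) (hcc : c'.1 = c.1 + 1) (i) (h : i.1 (lo c) ≠ i.1 (hi c')) :
      IBRel p q n β m N ((uφ c * uφ c' * uφ c - uφ c' * uφ c * uφ c') * ue i) 0
  | four1 (i) (h2 : 1 < n) (h : ib4c1 (i.1 ⟨0, Nat.lt_of_succ_lt h2⟩) (i.1 ⟨1, h2⟩)) :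
      IBRel p q n β m N (ufour h2 i)
        ((p * q⁻¹ + p⁻¹ * q) • ((uφ0 * uφ ⟨0, by omega⟩ - uφ ⟨0, by omega⟩ * uφ0) * ue i))
  | four2 (i) (h2 : 1 < n) (h : ib4c2 (i.1 ⟨0, Nat.lt_of_succ_lt h2⟩) (i.1 ⟨1, h2⟩))
      (Z : FreeAlgebra K (IBGen K n β))
      (hZ : RingQuot.mkAlgHom K (XBRel n β m N)
          ((1 - XmonOf uX uXi mA1) ^ 2 * ((1 - XmonOf uX uXi mR0A1) ^ 2 * (Z * ue i))) =
        RingQuot.mkAlgHom K (XBRel n β m N) (ue i)) :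
      IBRel p q n β m N (ufour h2 i)
        (-(((q - q⁻¹) ^ 2) •
          ((uφ0 * (1 - XmonOf uX uXi mA0) -
              (p • (1 : FreeAlgebra K (IBGen K n β)) - p⁻¹ • XmonOf uX uXi mA0)) *
            (XmonOf uX uXi mA1 *
              ((p • (1 : FreeAlgebra K (IBGen K n β)) - p⁻¹ • XmonOf uX uXi mR1A0) *
                (Z * ue i))))))
  | four3 (i) (h2 : 1 < n) (h : ib4c3 (i.1 ⟨0, Nat.lt_of_succ_lt h2⟩) (i.1 ⟨1, h2⟩))
      (Z : FreeAlgebra K (IBGen K n β))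
      (hZ : RingQuot.mkAlgHom K (XBRel n β m N)
          ((1 - XmonOf uX uXi mA1) ^ 2 * ((1 - XmonOf uX uXi mR0A1) ^ 2 * (Z * ue i))) =
        RingQuot.mkAlgHom K (XBRel n β m N) (ue i)) :
      IBRel p q n β m N (ufour h2 i)
        (-(((q - q⁻¹) ^ 2) •
          (uφ0 * ((1 - XmonOf uX uXi mA0) *
            (XmonOf uX uXi mA1 *
              ((p • (1 : FreeAlgebra K (IBGen K n β)) - p⁻¹ • XmonOf uX uXi mR1A0) *
                (Z * ue i)))))))
  | four4 (i) (h2 : 1 < n) (h : ib4c4 (i.1 ⟨0, Nat.lt_of_succ_lt h2⟩) (i.1 ⟨1, h2⟩))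
      (Z : FreeAlgebra K (IBGen K n β))
      (hZ : RingQuot.mkAlgHom K (XBRel n β m N)
          ((1 - XmonOf uX uXi mA0) ^ 2 * ((1 - XmonOf uX uXi mR1A0) ^ 2 * (Z * ue i))) =
        RingQuot.mkAlgHom K (XBRel n β m N) (ue i)) :
      IBRel p q n β m N (ufour h2 i)
        (((p - p⁻¹) ^ 2) •
          (uφ ⟨0, by omega⟩ * ((1 - XmonOf uX uXi mA1) *
            (XmonOf uX uXi mA0 * ((1 + XmonOf uX uXi mA1) *
              ((1 + XmonOf uX uXi mR0A1) *
                ((q • (1 : FreeAlgebra K (IBGen K n β)) - q⁻¹ • XmonOf uX uXi mR0A1) *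
                  (Z * ue i))))))))
  | four5 (i) (h2 : 1 < n)
      (h : ¬ib4c1 (i.1 ⟨0, Nat.lt_of_succ_lt h2⟩) (i.1 ⟨1, h2⟩) ∧
           ¬ib4c2 (i.1 ⟨0, Nat.lt_of_succ_lt h2⟩) (i.1 ⟨1, h2⟩) ∧
           ¬ib4c3 (i.1 ⟨0, Nat.lt_of_succ_lt h2⟩) (i.1 ⟨1, h2⟩) ∧
           ¬ib4c4 (i.1 ⟨0, Nat.lt_of_succ_lt h2⟩) (i.1 ⟨1, h2⟩)) :
      IBRel p q n β m N (ufour h2 i) 0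

/-- The intermediary algebra `𝕀_N` of Definition 5.1. -/
abbrev IB (p q : K) (n : ℕ) (β : Finset (Fin n → K)) (m : K →₀ ℕ) (N : ℕ) : Type :=
  RingQuot (IBRel p q n β m N)

/-! ### Formal power series helpers -/

/-- Composition `f ∘ g` of univariate power series (intended for `g` with zero constant
term, in which case this is the substitution of `g` into `f`). -/
def comp1 (f g : PowerSeries K) : PowerSeries K :=
  PowerSeries.mk fun d => ∑ k ∈ Finset.range (d + 1),
    PowerSeries.coeff (R := K) k f * PowerSeries.coeff (R := K) d (g ^ k)

/-- The power series `f(z) = z + z/(1-z)` used for the type B isomorphism. -/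
def fVV : PowerSeries K := PowerSeries.X + PowerSeries.X * (1 - PowerSeries.X)⁻¹

/-- The embedding `K[[z]] → K[[y_1,…,y_n]]`, `z ↦ y_a`. -/
def emb1 (a : Fin n) (h : PowerSeries K) : MvPowerSeries (Fin n) K :=
  fun d => if d.support ⊆ {a} then PowerSeries.coeff (R := K) (d a) h else 0

/-- The embedding `K[[z,z']] → K[[y_1,…,y_n]]`, `z ↦ y_a`, `z' ↦ y_b` (for `a ≠ b`). -/
def emb2 (a b : Fin n) (P : MvPowerSeries (Fin 2) K) : MvPowerSeries (Fin n) K :=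
  fun d => if d.support ⊆ {a, b} then
    MvPowerSeries.coeff (R := K) (Finsupp.single 0 (d a) + Finsupp.single 1 (d b)) P else 0

/-- The action of a permutation of the variables on `K[[y_1,…,y_n]]`. -/
def permPS (σ : Equiv.Perm (Fin n)) (P : MvPowerSeries (Fin n) K) :
    MvPowerSeries (Fin n) K :=
  fun d => MvPowerSeries.coeff (R := K) (Finsupp.equivMapDomain σ d) P

/-- The action of `r_0` (`y_1 ↦ -y_1`) on `K[[y_1,…,y_n]]`. -/
def negFirst (h0 : 0 < n) (P : MvPowerSeries (Fin n) K) : MvPowerSeries (Fin n) K :=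
  fun d => (-1 : K) ^ d ⟨0, h0⟩ * MvPowerSeries.coeff (R := K) d P

/-- `X_k(i) = i_k (1 - g(y_k))` as an element of `K[[y_1,…,y_n]]`. -/
def XofI (g : PowerSeries K) (i : Fin n → K) (k : Fin n) : MvPowerSeries (Fin n) K :=
  MvPowerSeries.C (σ := Fin n) (R := K) (i k) * (1 - emb1 k g)

/-- `X̄_1(i) = X_1(i)⁻¹ = i_1⁻¹ (1 - g(y_1))⁻¹`. -/
def XbarofI (g : PowerSeries K) (i : Fin n → K) (h0 : 0 < n) : MvPowerSeries (Fin n) K :=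
  MvPowerSeries.C (σ := Fin n) (R := K) (i ⟨0, h0⟩)⁻¹ * (1 - emb1 ⟨0, h0⟩ g)⁻¹

/-- The evaluated series `Q_k(i) ∈ K[[y_k, y_{k+1}]] ⊆ K[[y_1,…,y_n]]`. -/
def Qev {n : ℕ} (Q : Fin (n - 1) → K → K → MvPowerSeries (Fin 2) K)
    (c : Fin (n - 1)) (i : Fin n → K) : MvPowerSeries (Fin n) K :=
  emb2 (lo c) (hi c) (Q c (i (lo c)) (i (hi c)))

/-- Condition (★1). -/
def Star1 (q : K) (g : PowerSeries K) (S : Set K) (n : ℕ)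
    (Q : Fin (n - 1) → K → K → MvPowerSeries (Fin 2) K) : Prop :=
  ∀ i : Fin n → K, (∀ k, i k ∈ S) → ∀ c : Fin (n - 1), i (lo c) = i (hi c) →
    Qev Q c i * (emb1 (hi c) g - emb1 (lo c) g) =
      MvPowerSeries.C (σ := Fin n) (R := K) (i (lo c))⁻¹ *
        ((MvPowerSeries.C (σ := Fin n) (R := K) q⁻¹ * XofI g i (lo c) -
            MvPowerSeries.C (σ := Fin n) (R := K) q * XofI g i (hi c)) *
          (MvPowerSeries.X (hi c) - MvPowerSeries.X (lo c)))

/-- The product `{}^{r_k}Q_k(r_k(i)) ⋅ Q_k(i)`. -/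
def QQ2 {n : ℕ} (Q : Fin (n - 1) → K → K → MvPowerSeries (Fin 2) K)
    (c : Fin (n - 1)) (i : Fin n → K) : MvPowerSeries (Fin n) K :=
  permPS (Equiv.swap (lo c) (hi c)) (Qev Q c (sw c i)) * Qev Q c i

/-- `(X_k(i) - X_{k+1}(i))(X_{k+1}(i) - X_k(i))`. -/
def DD2 (g : PowerSeries K) (i : Fin n → K) (c : Fin (n - 1)) : MvPowerSeries (Fin n) K :=
  (XofI g i (lo c) - XofI g i (hi c)) * (XofI g i (hi c) - XofI g i (lo c))

/-- `(qX_k(i) - q⁻¹X_{k+1}(i))(qX_{k+1}(i) - q⁻¹X_k(i))`. -/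
def NN2 (q : K) (g : PowerSeries K) (i : Fin n → K) (c : Fin (n - 1)) :
    MvPowerSeries (Fin n) K :=
  (MvPowerSeries.C (σ := Fin n) (R := K) q * XofI g i (lo c) -
      MvPowerSeries.C (σ := Fin n) (R := K) q⁻¹ * XofI g i (hi c)) *
    (MvPowerSeries.C (σ := Fin n) (R := K) q * XofI g i (hi c) -
      MvPowerSeries.C (σ := Fin n) (R := K) q⁻¹ * XofI g i (lo c))

/-- Condition (★2). -/
def Star2 (q : K) (g : PowerSeries K) (S : Set K) (n : ℕ)
    (Q : Fin (n - 1) → K → K → MvPowerSeries (Fin 2) K) : Prop :=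
  ∀ i : Fin n → K, (∀ k, i k ∈ S) → ∀ c : Fin (n - 1),
    (qnon q (i (lo c)) (i (hi c)) → QQ2 Q c i * DD2 g i c = NN2 q g i c) ∧
    (qbak q (i (lo c)) (i (hi c)) →
      QQ2 Q c i * ((MvPowerSeries.X (hi c) - MvPowerSeries.X (lo c)) * DD2 g i c) =
        NN2 q g i c) ∧
    (qarr q (i (lo c)) (i (hi c)) →
      QQ2 Q c i * ((MvPowerSeries.X (lo c) - MvPowerSeries.X (hi c)) * DD2 g i c) =
        NN2 q g i c) ∧
    (qdbl q (i (lo c)) (i (hi c)) →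
      QQ2 Q c i * ((MvPowerSeries.X (hi c) - MvPowerSeries.X (lo c)) *
        ((MvPowerSeries.X (lo c) - MvPowerSeries.X (hi c)) * DD2 g i c)) = NN2 q g i c)

/-- Condition (★3). -/
def Star3 (S : Set K) (n : ℕ)
    (Q : Fin (n - 1) → K → K → MvPowerSeries (Fin 2) K) : Prop :=
  ∀ i : Fin n → K, (∀ k, i k ∈ S) → ∀ c c' : Fin (n - 1), c'.1 = c.1 + 1 →
    permPS (Equiv.swap (lo c) (hi c)) (Qev Q c' (sw c' (sw c i))) =
      permPS (Equiv.swap (lo c') (hi c')) (Qev Q c (sw c (sw c' i)))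

/-- Condition (★4). -/
def Star4 (p : K) (g : PowerSeries K) (S : Set K) (n : ℕ) (Q0 : K → PowerSeries K) : Prop :=
  ∀ i : Fin n → K, (∀ k, i k ∈ S) → ∀ h0 : 0 < n, (i ⟨0, h0⟩)⁻¹ = i ⟨0, h0⟩ →
    emb1 ⟨0, h0⟩ (Q0 (i ⟨0, h0⟩)) =
      MvPowerSeries.C (σ := Fin n) (R := K) (i ⟨0, h0⟩)⁻¹ *
        (MvPowerSeries.C (σ := Fin n) (R := K) p⁻¹ * XbarofI g i h0 -
          MvPowerSeries.C (σ := Fin n) (R := K) p * XofI g i ⟨0, h0⟩)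

/-- The product `{}^{r_0}Q_0(r_0(i)) ⋅ Q_0(i)`. -/
def QQ0 {n : ℕ} (Q0 : K → PowerSeries K) (h0 : 0 < n) (i : Fin n → K) :
    MvPowerSeries (Fin n) K :=
  negFirst h0 (emb1 ⟨0, h0⟩ (Q0 (i ⟨0, h0⟩)⁻¹)) * emb1 ⟨0, h0⟩ (Q0 (i ⟨0, h0⟩))

/-- `(X̄_1(i) - X_1(i))(X_1(i) - X̄_1(i))`. -/
def DD0 (g : PowerSeries K) (h0 : 0 < n) (i : Fin n → K) : MvPowerSeries (Fin n) K :=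
  (XbarofI g i h0 - XofI g i ⟨0, h0⟩) * (XofI g i ⟨0, h0⟩ - XbarofI g i h0)

/-- `(pX̄_1(i) - p⁻¹X_1(i))(pX_1(i) - p⁻¹X̄_1(i))`. -/
def NN0 (p : K) (g : PowerSeries K) (h0 : 0 < n) (i : Fin n → K) :
    MvPowerSeries (Fin n) K :=
  (MvPowerSeries.C (σ := Fin n) (R := K) p * XbarofI g i h0 -
      MvPowerSeries.C (σ := Fin n) (R := K) p⁻¹ * XofI g i ⟨0, h0⟩) *
    (MvPowerSeries.C (σ := Fin n) (R := K) p * XofI g i ⟨0, h0⟩ -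
      MvPowerSeries.C (σ := Fin n) (R := K) p⁻¹ * XbarofI g i h0)

/-- Condition (★5). -/
def Star5 (p : K) (g : PowerSeries K) (S : Set K) (n : ℕ) (Q0 : K → PowerSeries K) : Prop :=
  ∀ i : Fin n → K, (∀ k, i k ∈ S) → ∀ h0 : 0 < n,
    (pnon p (i ⟨0, h0⟩) → QQ0 Q0 h0 i * DD0 g h0 i = NN0 p g h0 i) ∧
    (parr p (i ⟨0, h0⟩) →
      QQ0 Q0 h0 i * (MvPowerSeries.X ⟨0, h0⟩ * DD0 g h0 i) = NN0 p g h0 i) ∧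
    (pbak p (i ⟨0, h0⟩) →
      QQ0 Q0 h0 i * (-MvPowerSeries.X ⟨0, h0⟩ * DD0 g h0 i) = NN0 p g h0 i) ∧
    (pdbl p (i ⟨0, h0⟩) →
      QQ0 Q0 h0 i * (-(MvPowerSeries.X ⟨0, h0⟩ * MvPowerSeries.X ⟨0, h0⟩) * DD0 g h0 i) =
        NN0 p g h0 i)

/-- Condition (★6). -/
def Star6 (S : Set K) (n : ℕ) (Q0 : K → PowerSeries K)
    (Q : Fin (n - 1) → K → K → MvPowerSeries (Fin 2) K) : Prop :=
  ∀ i : Fin n → K, (∀ k, i k ∈ S) → ∀ h2 : 1 < n,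
    (permPS (Equiv.swap ⟨0, Nat.lt_of_succ_lt h2⟩ ⟨1, h2⟩)
        (negFirst (Nat.lt_of_succ_lt h2)
          (permPS (Equiv.swap ⟨0, Nat.lt_of_succ_lt h2⟩ ⟨1, h2⟩)
            (emb1 ⟨0, Nat.lt_of_succ_lt h2⟩ (Q0 (i ⟨0, Nat.lt_of_succ_lt h2⟩))))) =
      emb1 ⟨0, Nat.lt_of_succ_lt h2⟩ (Q0 (i ⟨0, Nat.lt_of_succ_lt h2⟩))) ∧
    (negFirst (Nat.lt_of_succ_lt h2)
        (permPS (Equiv.swap ⟨0, Nat.lt_of_succ_lt h2⟩ ⟨1, h2⟩)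
          (negFirst (Nat.lt_of_succ_lt h2)
            (Qev Q ⟨0, by omega⟩
              (invMove (Nat.lt_of_succ_lt h2)
                (sw ⟨0, by omega⟩ (invMove (Nat.lt_of_succ_lt h2) i)))))) =
      Qev Q ⟨0, by omega⟩ i)

/-! ### Dimension vectors -/

/-- The dimension vector attached to a tuple: `dimvec i s = #{k : i_k ∈ {s, s⁻¹}}`. -/
def dimvec (i : Fin n → K) : K → ℕ := fun s =>
  (Finset.univ.filter fun k => i k = s ∨ i k = s⁻¹).card

end PdAW

end
namespace PdAW


/-! ### Auxiliary lemmas for Statement 7 -/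

section Statement7Aux

universe u
variable {A : Type u} [Ring A]

private lemma idem_pow {E : A} (hE : E * E = E) : ∀ k, E ^ (k + 1) = E
  | 0 => by simp
  | (k+1) => by rw [pow_succ, idem_pow hE k, hE]

private lemma pow_absorb {x e : A} {M N : ℕ} (h : M ≤ N) (hM : x ^ M * e = 0) :
    x ^ N * e = 0 := by
  have hx : x ^ N = x ^ (N - M) * x ^ M := by rw [← pow_add]; congr 1; omega
  rw [hx, mul_assoc, hM, mul_zero]

private lemma A_move {ψ u v e' : A} (hue' : Commute u e')
    (h1 : ψ * (u * e') = v * (ψ * e')) : ∀ k, ψ * (u ^ k * e') = v ^ k * (ψ * e')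
  | 0 => by simp
  | (k+1) => by
    have hk := A_move hue' h1 k
    have h2 : u ^ (k+1) * e' = (u * e') * u ^ k := by
      rw [pow_succ', mul_assoc, (hue'.pow_left k).eq, ← mul_assoc]
    rw [h2, ← mul_assoc, h1, mul_assoc, mul_assoc, ← (hue'.pow_left k).eq, hk,
      ← mul_assoc, ← pow_succ']

private lemma exists_commring {u v e : A} (huv : u * v = v * u) (hue : u * e = e * u)
    (hve : v * e = e * v) :
    ∃ (R : Type u) (_ : CommRing R) (ρ : R →+* A), Function.Injective ρ ∧
      ∃ U V E : R, ρ U = u ∧ ρ V = v ∧ ρ E = e := by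
  classical
  set s : Set A := {u, v, e} with hs
  have hcomm : ∀ x ∈ s, ∀ y ∈ s, x * y = y * x := by
    intro x hx y hy
    simp only [hs, Set.mem_insert_iff, Set.mem_singleton_iff] at hx hy
    rcases hx with rfl | rfl | rfl <;> rcases hy with rfl | rfl | rfl <;>
      first
        | rfl
        | exact huv
        | exact huv.symm
        | exact hue
        | exact hue.symm
        | exact hve
        | exact hve.symm
  letI : CommRing (Subring.closure s) := Subring.closureCommRingOfComm hcomm
  refine ⟨↥(Subring.closure s), inferInstance, (Subring.closure s).subtype,
    Subtype.val_injective, ⟨u, Subring.subset_closure (by simp [hs])⟩,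
    ⟨v, Subring.subset_closure (by simp [hs])⟩,
    ⟨e, Subring.subset_closure (by simp [hs])⟩, rfl, rfl, rfl⟩

private lemma comm_key {R : Type*} [CommRing R] {U V E W : R} {M T : ℕ} (hE : E * E = E)
    (key : V ^ T * E = U * (W * E)) (h2 : U ^ (M + 1) * E = 0) :
    V ^ (T * (M + 1)) * E = 0 := by
  have e1 : (V ^ T * E) ^ (M + 1) = V ^ (T * (M + 1)) * E := by
    rw [mul_pow, ← pow_mul, idem_pow hE]
  have e2 : (U * (W * E)) ^ (M + 1) = (W ^ (M + 1) * E ^ M) * (U ^ (M + 1) * E) := by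
    ring
  rw [← e1, key, e2, h2, mul_zero]

private lemma nil_from_key {u v e : A} (huv : u * v = v * u) (hue : u * e = e * u)
    (hve : v * e = e * v) (hee : e * e = e) {M : ℕ}
    (h2 : u ^ (M + 1) * e = 0)
    (hcase : v ^ (M + 1) * ((v - u) * e) = 0 ∨ v ^ (M + 1) * ((u - v) * e) = 0 ∨
      v ^ (M + 1) * ((v - u) * ((u - v) * e)) = 0) :
    ∃ L, 1 ≤ L ∧ v ^ L * e = 0 := by
  obtain ⟨R, _, ρ, ρinj, U, V, E, hU, hV, hE⟩ := exists_commring huv hue hve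
  have hER : E * E = E := by
    apply ρinj; rw [map_mul, hE]; exact hee
  have h2R : U ^ (M + 1) * E = 0 := by
    apply ρinj; rw [map_mul, map_pow, hU, hE, map_zero]; exact h2
  have main : ∃ T, 1 ≤ T ∧ V ^ (T * (M + 1)) * E = 0 := by
    rcases hcase with hc | hc | hc
    · have hcR : V ^ (M + 1) * ((V - U) * E) = 0 := by
        apply ρinj
        rw [map_mul, map_mul, map_sub, map_pow, hU, hV, hE, map_zero]; exact hc
      exact ⟨M + 2, by omega,
        comm_key (T := M + 2) (W := V ^ (M + 1)) hER (by linear_combination hcR) h2R⟩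
    · have hcR : V ^ (M + 1) * ((U - V) * E) = 0 := by
        apply ρinj
        rw [map_mul, map_mul, map_sub, map_pow, hU, hV, hE, map_zero]; exact hc
      exact ⟨M + 2, by omega,
        comm_key (T := M + 2) (W := V ^ (M + 1)) hER (by linear_combination -hcR) h2R⟩
    · have hcR : V ^ (M + 1) * ((V - U) * ((U - V) * E)) = 0 := by
        apply ρinj
        rw [map_mul, map_mul, map_mul, map_sub, map_sub, map_pow, hU, hV, hE, map_zero]
        exact hc
      exact ⟨M + 3, by omega,
        comm_key (T := M + 3) (W := 2 * V ^ (M + 2) - U * V ^ (M + 1)) hER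
          (by linear_combination -hcR) h2R⟩
  obtain ⟨T, hT1, hT⟩ := main
  refine ⟨T * (M + 1), by nlinarith, ?_⟩
  have := congrArg ρ hT
  rwa [map_mul, map_pow, hV, hE, map_zero] at this

private lemma nil_eq_case {ψ u v e : A} {M : ℕ}
    (huv : u * v = v * u) (hue : u * e = e * u) (hve : v * e = e * v) (hee : e * e = e)
    (hψe : ψ * e = e * ψ)
    (hψu : ψ * (u * e) = v * (ψ * e) - e)
    (hsq : ψ * (ψ * e) = 0)
    (h2 : u ^ (M + 2) * e = 0) :
    ∃ L, 1 ≤ L ∧ v ^ L * e = 0 := by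
  have cuv : Commute u v := huv
  have cue : Commute u e := hue
  have cve : Commute v e := hve
  set S : ℕ → A := fun k => ∑ a ∈ Finset.range k, v ^ a * u ^ (k - 1 - a) with hSdef
  have hSrec : ∀ k, S (k + 1) = S k * u + v ^ k := by
    intro k
    simp only [hSdef]
    rw [Finset.sum_range_succ, Finset.sum_mul]
    congr 1
    · apply Finset.sum_congr rfl
      intro a ha
      simp only [Finset.mem_range] at ha
      rw [mul_assoc, ← pow_succ]
      congr 2
      omega
    · simp
  have h2' : (ψ * e) * u = v * (ψ * e) - e := by
    rw [mul_assoc, ← cue.eq, hψu]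
  have hrec : ∀ k, ψ * (u ^ k * e) = v ^ k * (ψ * e) - S k * e := by
    intro k
    induction k with
    | zero => simp [hSdef]
    | succ k ih =>
      have h1 : u ^ (k + 1) * e = (u ^ k * e) * u := by
        rw [pow_succ, mul_assoc, cue.eq, ← mul_assoc]
      calc ψ * (u ^ (k + 1) * e) = (ψ * (u ^ k * e)) * u := by rw [h1, ← mul_assoc]
        _ = (v ^ k * (ψ * e) - S k * e) * u := by rw [ih]
        _ = v ^ k * ((ψ * e) * u) - S k * (e * u) := by
            rw [sub_mul, mul_assoc, mul_assoc (S k)]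
        _ = v ^ k * (v * (ψ * e) - e) - S k * (u * e) := by rw [h2', cue.eq]
        _ = v ^ (k + 1) * (ψ * e) - S (k + 1) * e := by
            rw [hSrec, mul_sub, ← mul_assoc, ← pow_succ, add_mul, mul_assoc]
            abel
  have hX : S (M + 2) * e = v ^ (M + 2) * (ψ * e) := by
    have h := hrec (M + 2)
    rw [h2, mul_zero] at h
    exact (sub_eq_zero.mp h.symm).symm
  have cvS : Commute v (S (M + 2)) := by
    apply Commute.sum_right
    intro a _
    exact ((Commute.refl v).pow_right a).mul_right (cuv.symm.pow_right _)
  have heψe : e * (ψ * e) = ψ * e := by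
    rw [← mul_assoc, ← hψe, mul_assoc, hee]
  have hXe : (S (M + 2) * e) * (ψ * e) = 0 := by
    rw [mul_assoc, heψe]
    calc S (M + 2) * (ψ * e) = (S (M + 2) * e) * ψ := by rw [hψe, ← mul_assoc]
      _ = v ^ (M + 2) * ((ψ * e) * ψ) := by rw [hX, mul_assoc]
      _ = 0 := by rw [mul_assoc, ← hψe, hsq, mul_zero]
  have hXX : (S (M + 2) * e) * (S (M + 2) * e) = 0 := by
    nth_rewrite 2 [hX]
    rw [← mul_assoc]
    rw [((cvS.mul_right cve).pow_left (M + 2)).symm.eq]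
    rw [mul_assoc, hXe, mul_zero]
  obtain ⟨R, _, ρ, ρinj, U, V, E, hU, hV, hE⟩ := exists_commring huv hue hve
  have hER : E * E = E := by
    apply ρinj; rw [map_mul, hE]; exact hee
  have h2R : U ^ (M + 2) * E = 0 := by
    apply ρinj; rw [map_mul, map_pow, hU, hE, map_zero]; exact h2
  have hρS : ρ ((∑ a ∈ Finset.range (M + 2), V ^ a * U ^ (M + 2 - 1 - a)) * E)
      = S (M + 2) * e := by
    rw [map_mul, map_sum, hE]
    simp only [hSdef]
    congr 1
    apply Finset.sum_congr rfl
    intro a _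
    rw [map_mul, map_pow, map_pow, hU, hV]
  have hTT : ((∑ a ∈ Finset.range (M + 2), V ^ a * U ^ (M + 2 - 1 - a)) * E)
      * ((∑ a ∈ Finset.range (M + 2), V ^ a * U ^ (M + 2 - 1 - a)) * E) = 0 := by
    apply ρinj
    rw [map_mul, hρS, map_zero]
    exact hXX
  have hsplit : (∑ a ∈ Finset.range (M + 2), V ^ a * U ^ (M + 2 - 1 - a))
      = U * (∑ a ∈ Finset.range (M + 1), V ^ a * U ^ (M - a)) + V ^ (M + 1) := by
    rw [Finset.sum_range_succ, Finset.mul_sum]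
    congr 1
    · apply Finset.sum_congr rfl
      intro a ha
      simp only [Finset.mem_range] at ha
      have hx : M + 2 - 1 - a = (M - a) + 1 := by omega
      rw [hx, pow_succ]
      ring
    · have hx : M + 2 - 1 - (M + 1) = 0 := by omega
      rw [hx, pow_zero, mul_one]
  have hxeq : V ^ (M + 1) * E
      = ((∑ a ∈ Finset.range (M + 2), V ^ a * U ^ (M + 2 - 1 - a)) * E)
        - U * ((∑ a ∈ Finset.range (M + 1), V ^ a * U ^ (M - a)) * E) := by
    linear_combination (-E) * hsplit
  have hTnil : IsNilpotent ((∑ a ∈ Finset.range (M + 2), V ^ a * U ^ (M + 2 - 1 - a)) * E) :=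
    ⟨2, by rw [sq]; exact hTT⟩
  have hQnil : IsNilpotent (U * ((∑ a ∈ Finset.range (M + 1), V ^ a * U ^ (M - a)) * E)) := by
    refine ⟨M + 2, ?_⟩
    have hx : (U * ((∑ a ∈ Finset.range (M + 1), V ^ a * U ^ (M - a)) * E)) ^ (M + 2)
        = ((∑ a ∈ Finset.range (M + 1), V ^ a * U ^ (M - a)) ^ (M + 2) * E ^ (M + 1))
          * (U ^ (M + 2) * E) := by ring
    rw [hx, h2R, mul_zero]
  have hvnil : IsNilpotent (V ^ (M + 1) * E) := by
    rw [hxeq]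
    exact (Commute.all _ _).isNilpotent_sub hTnil hQnil
  obtain ⟨L0, hL0⟩ := hvnil
  have hfin : V ^ ((M + 1) * (L0 + 1)) * E = 0 := by
    have e1 : (V ^ (M + 1) * E) ^ (L0 + 1) = V ^ ((M + 1) * (L0 + 1)) * E := by
      rw [mul_pow, ← pow_mul, idem_pow hER]
    rw [← e1, pow_succ, hL0, zero_mul]
  refine ⟨(M + 1) * (L0 + 1), by nlinarith, ?_⟩
  have := congrArg ρ hfin
  rwa [map_mul, map_pow, hV, hE, map_zero] at this

end Statement7Aux

section Statement7Sw

variable {K : Type} [Field K] {n : ℕ}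

private lemma sw_lo_apply (c : Fin (n - 1)) (i : Fin n → K) : sw c i (lo c) = i (hi c) := by
  simp [sw, swapMove, lo, hi]

private lemma sw_hi_apply (c : Fin (n - 1)) (i : Fin n → K) : sw c i (hi c) = i (lo c) := by
  simp [sw, swapMove, lo, hi]

private lemma sw_self {c : Fin (n - 1)} {i : Fin n → K} (h : i (lo c) = i (hi c)) :
    sw c i = i := by
  funext x
  show i ((Equiv.swap (lo c) (hi c)) x) = i x
  rcases eq_or_ne x (lo c) with rfl | hx1
  · rw [Equiv.swap_apply_left]; exact h.symm
  rcases eq_or_ne x (hi c) with rfl | hx2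
  · rw [Equiv.swap_apply_right]; exact h
  · rw [Equiv.swap_apply_of_ne_of_ne hx1 hx2]

private lemma mem_of_sw {β : Finset (Fin n → K)}
    (hβ : IsBOrbit (↑β : Set (Fin n → K))) {i : Fin n → K} (hi : i ∈ β) (c : Fin (n - 1)) :
    sw c i ∈ β := by
  obtain ⟨i₀, h₀, hset⟩ := hβ
  have h1 : i ∈ {j | inOrbitB i₀ j} := by rw [← hset]; exact hi
  have h2 : inOrbitB i₀ (sw c i) :=
    Relation.ReflTransGen.tail h1 (Or.inl ⟨c.1, fin_lt c, rfl⟩)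
  have h3 : sw c i ∈ (↑β : Set (Fin n → K)) := by rw [hset]; exact h2
  exact_mod_cast h3

end Statement7Sw

/-- In the cyclotomic generalized Varagnolo–Vasserot algebra `V^β_{λ,m}`,
the elements `y_1, …, y_n` are nilpotent. -/
theorem statement7 {K : Type} [Field K] (p q : K)
    (hp : p ≠ 0) (hq : q ≠ 0) (hp2 : p ^ 2 ≠ 1) (hq2 : q ^ 2 ≠ 1) (hchar : (2 : K) ≠ 0)
    {l : ℕ} (lam : Fin l → K) (hlam : ∀ a, lam a ≠ 0)
    (hdisj : ∀ a b : Fin l, a ≠ b → Iset q (lam a) ∩ Iset q (lam b) = ∅)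
    (m : K →₀ ℕ) (hm : ∀ x ∈ m.support, x ∈ Sset q lam)
    (n : ℕ) (hn : 0 < n)
    (β : Finset (Fin n → K)) (hβ : IsBOrbit (↑β : Set (Fin n → K)))
    (hβS : ∀ i ∈ β, ∀ k, i k ∈ Sset q lam) :
    ∀ k : Fin n, IsNilpotent (RingQuot.mkAlgHom K (VRel p q n β m) (vy k)) := by
  classical
  intro k
  let mk := RingQuot.mkAlgHom K (VRel p q n β m)
  have rel : ∀ {a b : FreeAlgebra K (VGen K n β)}, VRel p q n β m a b → mk a = mk b :=
    fun h => RingQuot.mkAlgHom_rel K h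
  let Y : Fin n → VB p q n β m := fun j => mk (vy j)
  let E : {x // x ∈ β} → VB p q n β m := fun i => mk (ve i)
  let Ψ : Fin (n - 1) → VB p q n β m := fun c => mk (vψ c)
  have hEE : ∀ i, E i * E i = E i := by
    intro i
    have h := rel (VRel.eidem i)
    rw [map_mul] at h
    exact h
  have hYY : ∀ j l, Y j * Y l = Y l * Y j := by
    intro j l
    have h := rel (VRel.ycomm j l)
    rw [map_mul, map_mul] at h
    exact h
  have hYE : ∀ j i, Y j * E i = E i * Y j := by
    intro j i
    have h := rel (VRel.ye j i)
    rw [map_mul, map_mul] at h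
    exact h
  have main : ∀ r : ℕ, ∀ hr : r < n,
      ∃ N, 2 ≤ N ∧ ∀ i : {x // x ∈ β}, Y ⟨r, hr⟩ ^ N * E i = 0 := by
    intro r
    induction r with
    | zero =>
      intro hr
      refine ⟨2 + β.attach.sup (fun i => m (i.1 ⟨0, hr⟩)), by omega, fun i => ?_⟩
      have h := rel (VRel.cyc i hr)
      rw [map_mul, map_pow, map_zero] at h
      exact pow_absorb
        (le_trans (Finset.le_sup (Finset.mem_attach _ i)) (Nat.le_add_left _ 2)) h
    | succ r ih =>
      intro hr
      obtain ⟨N, hN2, hN⟩ := ih (by omega)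
      let c : Fin (n - 1) := ⟨r, by omega⟩
      have hNlo : ∀ j : {x // x ∈ β}, Y (lo c) ^ N * E j = 0 := fun j => hN j
      have key : ∀ i : {x // x ∈ β}, ∃ L, 1 ≤ L ∧ Y (hi c) ^ L * E i = 0 := by
        intro i
        by_cases heq : i.1 (lo c) = i.1 (hi c)
        · -- case i_b = i_{b+1}
          obtain ⟨M, hM⟩ : ∃ M, N = M + 2 := ⟨N - 2, by omega⟩
          have hswself : sw c i.1 = i.1 := sw_self heq
          have hmem : sw c i.1 ∈ β := by rw [hswself]; exact i.2
          have hψe : Ψ c * E i = E i * Ψ c := by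
            have h := rel (VRel.psiE c i hmem)
            rw [map_mul, map_mul] at h
            rwa [show (⟨sw c i.1, hmem⟩ : {x // x ∈ β}) = i from Subtype.ext hswself] at h
          have hψu : Ψ c * (Y (lo c) * E i) = Y (hi c) * (Ψ c * E i) - E i := by
            have h := rel (VRel.psiyB c i heq)
            rw [map_mul, map_sub, map_mul, map_mul, map_neg, sub_mul] at h
            rw [← mul_assoc, ← mul_assoc]
            rw [sub_eq_iff_eq_add] at h
            rw [h, neg_add_eq_sub]
          have hsq : Ψ c * (Ψ c * E i) = 0 := by
            have h := rel (VRel.sqEq c i heq)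
            rw [map_mul, map_mul, map_zero] at h
            rwa [mul_assoc] at h
          have h2 : Y (lo c) ^ (M + 2) * E i = 0 := by rw [← hM]; exact hNlo i
          exact nil_eq_case (hYY (lo c) (hi c)) (hYE (lo c) i) (hYE (hi c) i) (hEE i)
            hψe hψu hsq h2
        · -- case i_b ≠ i_{b+1}
          obtain ⟨M, hM⟩ : ∃ M, N = M + 1 := ⟨N - 1, by omega⟩
          have hmem : sw c i.1 ∈ β := mem_of_sw hβ i.2 c
          let i' : {x // x ∈ β} := ⟨sw c i.1, hmem⟩
          have hlo' : i'.1 (lo c) = i.1 (hi c) := sw_lo_apply c i.1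
          have hhi' : i'.1 (hi c) = i.1 (lo c) := sw_hi_apply c i.1
          have hne' : i'.1 (lo c) ≠ i'.1 (hi c) := by
            rw [hlo', hhi']; exact fun hx => heq hx.symm
          have hmove : Ψ c * (Y (lo c) * E i') = Y (hi c) * (Ψ c * E i') := by
            have h := rel (VRel.psiyO c i' (lo c) (Or.inl hne'))
            rw [Equiv.swap_apply_left, map_mul, map_sub, map_mul, map_mul, map_zero,
              sub_mul] at h
            rw [← mul_assoc, ← mul_assoc]
            exact sub_eq_zero.mp h
          have hφ : Y (hi c) ^ N * (Ψ c * E i') = 0 := by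
            have h := A_move (hYE (lo c) i') hmove N
            rw [hNlo i', mul_zero] at h
            exact h.symm
          have hψei : Ψ c * E i = E i' * Ψ c := by
            have h := rel (VRel.psiE c i hmem)
            rw [map_mul, map_mul] at h
            exact h
          have hsq2 : Y (hi c) ^ N * (Ψ c * (Ψ c * E i)) = 0 := by
            rw [hψei, ← mul_assoc (Ψ c), ← mul_assoc, hφ, zero_mul]
          have hsq2' : Y (hi c) ^ N * ((Ψ c * Ψ c) * E i) = 0 := by
            rwa [mul_assoc]
          by_cases h2a : i.1 (hi c) = q ^ 2 * i.1 (lo c) <;>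
            by_cases h2b : i.1 (hi c) = (q ^ 2)⁻¹ * i.1 (lo c)
          · -- double arrow
            have hrel : Ψ c * Ψ c * E i
                = (Y (hi c) - Y (lo c)) * ((Y (lo c) - Y (hi c)) * E i) := by
              have h := rel (VRel.sqDbl c i ⟨h2a, h2b⟩)
              simp only [map_mul, map_sub] at h
              exact h
            have hcase : Y (hi c) ^ N *
                ((Y (hi c) - Y (lo c)) * ((Y (lo c) - Y (hi c)) * E i)) = 0 := by
              rw [← hrel]; exact hsq2'
            rw [hM] at hcase
            have h2 : Y (lo c) ^ (M + 1) * E i = 0 := by rw [← hM]; exact hNlo i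
            exact nil_from_key (hYY (lo c) (hi c)) (hYE (lo c) i) (hYE (hi c) i) (hEE i)
              h2 (Or.inr (Or.inr hcase))
          · -- arrow i_b → i_{b+1}
            have hrel : Ψ c * Ψ c * E i = (Y (hi c) - Y (lo c)) * E i := by
              have h := rel (VRel.sqArr c i ⟨h2a, h2b⟩)
              simp only [map_mul, map_sub] at h
              exact h
            have hcase : Y (hi c) ^ N * ((Y (hi c) - Y (lo c)) * E i) = 0 := by
              rw [← hrel]; exact hsq2'
            rw [hM] at hcase
            have h2 : Y (lo c) ^ (M + 1) * E i = 0 := by rw [← hM]; exact hNlo i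
            exact nil_from_key (hYY (lo c) (hi c)) (hYE (lo c) i) (hYE (hi c) i) (hEE i)
              h2 (Or.inl hcase)
          · -- arrow i_{b+1} → i_b
            have hrel : Ψ c * Ψ c * E i = (Y (lo c) - Y (hi c)) * E i := by
              have h := rel (VRel.sqBak c i ⟨h2b, h2a⟩)
              simp only [map_mul, map_sub] at h
              exact h
            have hcase : Y (hi c) ^ N * ((Y (lo c) - Y (hi c)) * E i) = 0 := by
              rw [← hrel]; exact hsq2'
            rw [hM] at hcase
            have h2 : Y (lo c) ^ (M + 1) * E i = 0 := by rw [← hM]; exact hNlo i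
            exact nil_from_key (hYY (lo c) (hi c)) (hYE (lo c) i) (hYE (hi c) i) (hEE i)
              h2 (Or.inr (Or.inl hcase))
          · -- not adjacent
            have hrel : Ψ c * Ψ c * E i = E i := by
              have h := rel (VRel.sqNon c i ⟨heq, h2a, h2b⟩)
              simp only [map_mul] at h
              exact h
            have hcase : Y (hi c) ^ N * E i = 0 := by rw [← hrel]; exact hsq2'
            exact ⟨N, by omega, hcase⟩
      choose f hf1 hf2 using key
      refine ⟨2 + β.attach.sup f, by omega, fun i => ?_⟩
      exact pow_absorb
        (le_trans (Finset.le_sup (Finset.mem_attach _ i)) (Nat.le_add_left _ 2)) (hf2 i)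
  obtain ⟨N, hN2, hN⟩ := main k.1 k.2
  have hsum : (∑ i ∈ β.attach, E i) = 1 := by
    have h := rel VRel.esum
    rw [map_sum, map_one] at h
    exact h
  refine ⟨N, ?_⟩
  calc mk (vy k) ^ N = mk (vy k) ^ N * ∑ i ∈ β.attach, E i := by rw [hsum, mul_one]
    _ = ∑ i ∈ β.attach, mk (vy k) ^ N * E i := Finset.mul_sum _ _ _
    _ = 0 := Finset.sum_eq_zero fun i _ => hN i


end PdAW
end

section
/- Let M be a module over the affine Hecke algebra Ĥ(A_n), let I ⊂ K∖{0} be a finite set, and suppose the element P(X_1) := ∏_{λ∈I}(X_1 − λ)^{m(λ)} acts as 0 on M for some integers m(λ) > 0. Then for every k ∈ {1,…,n} there exist integers m_k(μ) ≥ 0 such that the element Q_k(X_k) := ∏_{μ∈I_k}(X_k − μ)^{m_k(μ)} acts as 0 on M, where I_k := {λq^{2l} : λ ∈ I, 0 ≤ |l| ≤ k−1}. Consequently, as a module over the commutative subalgebra K[X_1^{±1},…,X_n^{±1}], M decomposes as the direct sum over i = (i_1,…,i_n) ∈ I_1 × ⋯ × I_n of the common generalized eigenspaces M_i := {v ∈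 M : for every k = 1,…,n, (X_k − i_k)^N v = 0 for some N > 0}. -/
/-!
Formalization of definitions from:
L. Poulain d'Andecy and R. Walker, "Affine Hecke algebras and generalisations
of quiver Hecke algebras for type B".

Presented algebras are realized as `RingQuot` quotients of free algebras.
-/

open scoped BigOperators Classical

namespace PdAW
namespace Statement8Aux

open Polynomial

section Kill
variable {R : Type} [CommRing R]

lemma killC1 (Jm Jv : Ideal R) (hJ : Jm ≤ Jv) (s t a b : R) :
    ∀ (r : ℕ) (z lam : R), z * ((s - a*t) * (s - b*t)) ∈ Jm →
      z * (s - lam)^r ∈ Jv → z * ((lam - a*t) * (lam - b*t))^r ∈ Jv := by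
  intro r
  induction r with
  | zero => intro z lam _ h; simpa using h
  | succ r ih =>
    intro z lam hz h
    have hz1 : (z * (s - lam)) * ((s - a*t) * (s - b*t)) ∈ Jm := by
      have := Jm.mul_mem_left (s - lam) hz
      convert this using 1; ring
    have h1 : (z * (s - lam)) * (s - lam)^r ∈ Jv := by
      convert h using 1; ring
    have h2 := ih (z * (s - lam)) lam hz1 h1
    have key : z * ((lam - a*t) * (lam - b*t))^(r+1) =
        ((lam - a*t) * (lam - b*t))^r * (z * ((s - a*t) * (s - b*t)))
        + (-(s + lam - a*t - b*t)) * (z * (s - lam) * ((lam - a*t) * (lam - b*t))^r) := by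
      ring
    rw [key]
    exact add_mem (hJ (Jm.mul_mem_left _ hz)) (Jv.mul_mem_left _ h2)

lemma killC2 (Jm Jv : Ideal R) (hJ : Jm ≤ Jv) (s t a b : R) :
    ∀ (L : Multiset R) (z : R), z * ((s - a*t) * (s - b*t)) ∈ Jm →
      z * (L.map (fun lam => s - lam)).prod ∈ Jv →
      z * (L.map (fun lam => (lam - a*t) * (lam - b*t))).prod ∈ Jv := by
  intro L
  induction L using Multiset.induction_on with
  | empty => intro z _ h; simpa using h
  | cons lam L ih =>
    intro z hz h
    simp only [Multiset.map_cons, Multiset.prod_cons] at h ⊢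
    have hz1 : (z * (L.map (fun l => s - l)).prod) * ((s - a*t) * (s - b*t)) ∈ Jm := by
      have := Jm.mul_mem_left ((L.map (fun l => s - l)).prod) hz
      convert this using 1; ring
    have h1 : (z * (L.map (fun l => s - l)).prod) * (s - lam)^1 ∈ Jv := by
      convert h using 1; ring
    have h2 := killC1 Jm Jv hJ s t a b 1 _ lam hz1 h1
    have hz2 : (z * ((lam - a*t) * (lam - b*t))) * ((s - a*t) * (s - b*t)) ∈ Jm := by
      have := Jm.mul_mem_left ((lam - a*t) * (lam - b*t)) hz
      convert this using 1; ring
    have h3 : (z * ((lam - a*t) * (lam - b*t))) * (L.map (fun l => s - l)).prod ∈ Jv := by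
      convert h2 using 1; ring
    have h4 := ih _ hz2 h3
    convert h4 using 1
    ring
end Kill

section Phi
variable {K A : Type} [Field K] [Ring A] [Algebra K A]
variable (a : K) (g s t : A)

lemma hphi_repr (hg2 : g*g = a • g + 1) (hgsg : g*s*g = t) :
    g * s = t * g - a • t := by
  have hginv : g * (g - a • (1:A)) = 1 := by
    rw [mul_sub, hg2, mul_smul_comm, mul_one]; abel
  calc g * s = (g*s) * (g * (g - a • (1:A))) := by rw [hginv, mul_one]
    _ = (g*s*g) * (g - a • (1:A)) := by noncomm_ring
    _ = t * g - a • t := by rw [hgsg, mul_sub, mul_smul_comm, mul_one]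

lemma hgt_lem (hg2 : g*g = a • g + 1) (hgsg : g*s*g = t) :
    g * t = s * g + a • t := by
  calc g * t = (g*g) * (s * g) := by rw [← hgsg]; noncomm_ring
    _ = (a • g + 1) * (s*g) := by rw [hg2]
    _ = a • (g*(s*g)) + s*g := by rw [add_mul, one_mul, smul_mul_assoc]
    _ = s * g + a • t := by rw [← mul_assoc, hgsg]; abel

lemma phi_s (hg2 : g*g = a • g + 1) (hgsg : g*s*g = t) (hst : s*t = t*s) :
    (t*g - s*g - a • t) * s = t * (t*g - s*g - a • t) := by
  have hgs := hphi_repr a g s t hg2 hgsg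
  have e1 : (t*g - s*g - a • t) * s = t*(g*s) - s*(g*s) - a • (t*s) := by
    simp only [sub_mul, mul_assoc, smul_mul_assoc]
  rw [e1, hgs]
  simp only [mul_sub, mul_smul_comm, sub_mul, smul_mul_assoc, ← mul_assoc, hst]
  abel

lemma phi_sq (hg2 : g*g = a • g + 1) (hgsg : g*s*g = t) (hst : s*t = t*s) :
    (t*g - s*g - a • t) * (t*g - s*g - a • t) = (a*a) • (s*t) - (s-t)*(s-t) := by
  have hgs := hphi_repr a g s t hg2 hgsg
  have hgt := hgt_lem a g s t hg2 hgsg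
  have hgtg : g*(t*g) = a • (s*g) + s + a • (t*g) := by
    rw [← mul_assoc, hgt, add_mul, smul_mul_assoc, mul_assoc, hg2, mul_add, mul_smul_comm,
      mul_one]
  have hgP : g*(t*g - s*g - a • t) = s - t + a • (t*g) - (a*a) • t := by
    rw [mul_sub, mul_sub, hgtg, ← mul_assoc, hgsg, mul_smul_comm, hgt]
    simp only [smul_add, smul_smul]
    abel
  calc (t*g - s*g - a • t) * (t*g - s*g - a • t)
      = t*(g*(t*g - s*g - a • t)) - s*(g*(t*g - s*g - a • t))
        - a • (t*(t*g - s*g - a • t)) := by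
        simp only [sub_mul, mul_assoc, smul_mul_assoc]
    _ = (a*a) • (s*t) - (s-t)*(s-t) := by
        rw [hgP]
        simp only [mul_sub, mul_add, mul_smul_comm, smul_sub, smul_add, smul_smul, sub_mul,
          ← mul_assoc, hst]
        abel
end Phi

section PolyLemmas
variable {K : Type} [Field K]
variable {A : Type} [Ring A] [Algebra K A]

lemma polyProd_eq_aeval (x : A) (J : Finset K) (m : K → ℕ) :
    polyProd x J m = aeval x (∏ μ ∈ J, (X - C μ)^(m μ)) := by
  classical
  unfold polyProd
  induction J using Finset.induction_on with
  | empty => exact (Finset.noncommProd_empty _ _).trans (by simp)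
  | insert _ _ ha ih =>
    refine (Finset.noncommProd_insert_of_notMem _ _ _ _ ha).trans ?_
    rw [Finset.prod_insert ha, map_mul, ih,
      map_pow, map_sub, aeval_X, aeval_C]

lemma prod_pow_eq_multiset (J : Finset K) (m : K → ℕ) :
    ∏ μ ∈ J, ((X : K[X]) - C μ)^(m μ) =
      ((J.val.bind fun μ => Multiset.replicate (m μ) μ).map fun μ => X - C μ).prod := by
  rw [Multiset.map_bind, Multiset.prod_bind, Finset.prod_eq_multiset_prod]
  congr 1
  apply Multiset.map_congr rfl
  intro μ _
  rw [Multiset.map_replicate, Multiset.prod_replicate]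

lemma count_prod_eq (J : Finset K) (L : Multiset K) (hL : ∀ μ ∈ L, μ ∈ J) :
    ∏ μ ∈ J, ((X : K[X]) - C μ)^(L.count μ) = (L.map fun μ => X - C μ).prod := by
  rw [Finset.prod_multiset_map_count]
  apply (Finset.prod_subset ?_ ?_).symm
  · intro μ hμ; exact hL μ (Multiset.mem_toFinset.mp hμ)
  · intro μ _ hμ
    rw [Multiset.count_eq_zero_of_notMem (fun h => hμ (Multiset.mem_toFinset.mpr h)), pow_zero]

lemma aeval_multiset_prod {R : Type} [CommRing R] [Algebra K R] (y : R) (L : Multiset K) :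
    aeval y ((L.map fun μ => (X : K[X]) - C μ).prod) =
      (L.map fun μ => y - algebraMap K R μ).prod := by
  rw [map_multiset_prod, Multiset.map_map]
  congr 1
  apply Multiset.map_congr rfl
  intro μ _
  simp

lemma phi_intertwine (Φ S T : A) (hS : Φ * S = T * Φ) (L : Multiset K) :
    Φ * aeval S ((L.map fun μ => (X:K[X]) - C μ).prod)
      = aeval T ((L.map fun μ => (X:K[X]) - C μ).prod) * Φ := by
  induction L using Multiset.induction_on with
  | empty => simp
  | cons μ L ih =>
    simp only [Multiset.map_cons, Multiset.prod_cons, map_mul, map_sub, aeval_X, aeval_C]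
    calc Φ * ((S - algebraMap K A μ) * aeval S ((L.map fun μ => (X:K[X]) - C μ).prod))
        = (Φ * (S - algebraMap K A μ)) * aeval S ((L.map fun μ => (X:K[X]) - C μ).prod) := by
          rw [mul_assoc]
      _ = ((T - algebraMap K A μ) * Φ) * aeval S ((L.map fun μ => (X:K[X]) - C μ).prod) := by
          rw [mul_sub, sub_mul, hS, ← Algebra.commutes μ Φ]; noncomm_ring
      _ = (T - algebraMap K A μ) * (aeval T ((L.map fun μ => (X:K[X]) - C μ).prod) * Φ) := by
          rw [mul_assoc, ih]
      _ = _ := by rw [← mul_assoc]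
end PolyLemmas
section StepLemma
variable {K A M : Type} [Field K] [Ring A] [Algebra K A] [AddCommGroup M] [Module A M]

lemma step_lemma (q : K) (hq : q ≠ 0) (g S T : A)
    (hg2 : g*g = (q - q⁻¹) • g + 1) (hgsg : g*S*g = T) (hST : S*T = T*S)
    (L : Multiset K)
    (hL : ∀ v : M, Polynomial.aeval S ((L.map fun μ => (X:K[X]) - C μ).prod) • v = 0) :
    ∀ v : M, Polynomial.aeval T
      (((L + L.map (fun μ => (q^2)⁻¹ * μ) + L.map (fun μ => q^2 * μ)).map
        fun μ => (X:K[X]) - C μ).prod) • v = 0 := by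
  set a : K := q - q⁻¹ with ha
  set Φ : A := T*g - S*g - a • T with hΦ
  have hps : Φ * S = T * Φ := phi_s a g S T hg2 hgsg hST
  have hsq : Φ * Φ = (a*a) • (S*T) - (S-T)*(S-T) := phi_sq a g S T hg2 hgsg hST
  set P : K[X] := (L.map fun μ => (X:K[X]) - C μ).prod with hP
  have h1 : ∀ v : M, (Polynomial.aeval T P * Φ) • v = 0 := by
    intro v
    rw [← phi_intertwine Φ S T hps L, mul_smul, hL v, smul_zero]
  have h3 : ∀ v : M, (Polynomial.aeval T P * ((a*a) • (S*T) - (S-T)*(S-T))) • v = 0 := by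
    intro v
    rw [← hsq, ← mul_assoc, mul_smul, h1 (Φ • v)]
  letI R : Subalgebra K A := Algebra.adjoin K ({S, T} : Set A)
  letI : CommRing R := Algebra.adjoinCommRingOfComm K (by
    rintro u hu w hw
    simp only [Set.mem_insert_iff, Set.mem_singleton_iff] at hu hw
    rcases hu with rfl | rfl <;> rcases hw with rfl | rfl
    · rfl
    · exact hST
    · exact hST.symm
    · rfl)
  let V := (Algebra.adjoin K ({S, T} : Set A)).val
  let sR : R := ⟨S, Algebra.subset_adjoin (by simp)⟩
  let tR : R := ⟨T, Algebra.subset_adjoin (by simp)⟩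
  have hVs : V sR = S := rfl
  have hVt : V tR = T := rfl
  let c : K →+* R := algebraMap K R
  let Q : R := algebraMap K R q
  let Q' : R := algebraMap K R q⁻¹
  have hQ : Q * Q' = 1 := by
    rw [← map_mul, mul_inv_cancel₀ hq, map_one]
  let Jm : Ideal R :=
    { carrier := {z : R | ∀ w : M, (V z) • w = 0}
      add_mem' := by intro z1 z2 h1 h2; intro w
                     rw [map_add, add_smul, h1 w, h2 w, add_zero]
      zero_mem' := by intro w; rw [map_zero, zero_smul]
      smul_mem' := by intro z1 z2 h w
                      simp only [smul_eq_mul]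
                      rw [map_mul, mul_smul, h w, smul_zero] }
  intro v
  let Jv : Ideal R :=
    { carrier := {z : R | (V z) • v = 0}
      add_mem' := by intro z1 z2 h1 h2
                     simp only [Set.mem_setOf_eq] at *
                     rw [map_add, add_smul, h1, h2, add_zero]
      zero_mem' := by simp only [Set.mem_setOf_eq]; rw [map_zero, zero_smul]
      smul_mem' := by intro z1 z2 h
                      simp only [Set.mem_setOf_eq, smul_eq_mul] at *
                      rw [map_mul, mul_smul, h, smul_zero] }
  have hJ : Jm ≤ Jv := fun z hz => hz v
  have hVaeval_t : ∀ p : K[X], V (Polynomial.aeval tR p) = Polynomial.aeval T p := by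
    intro p; exact (Polynomial.aeval_algHom_apply V tR p).symm
  have hVaeval_s : ∀ p : K[X], V (Polynomial.aeval sR p) = Polynomial.aeval S p := by
    intro p; exact (Polynomial.aeval_algHom_apply V sR p).symm
  have e1 : c (q^2) = Q^2 := by simp only [map_pow, c, Q]
  have e2 : c ((q^2)⁻¹) = Q'^2 := by
    rw [← inv_pow]; simp only [map_pow, c, Q']
  have hu : (a*a) • (sR*tR) - (sR-tR)*(sR-tR)
      = -((sR - c (q^2) * tR) * (sR - c ((q^2)⁻¹) * tR)) := by
    have e3 : (a*a) • (sR*tR) = ((Q - Q')*(Q - Q')) * (sR*tR) := by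
      rw [Algebra.smul_def, map_mul, ha, map_sub]
    rw [e1, e2, e3]
    linear_combination ((Q*Q'+1)*tR^2 - 2*sR*tR) * hQ
  have hzJm : Polynomial.aeval tR P * ((sR - c (q^2) * tR) * (sR - c ((q^2)⁻¹) * tR)) ∈ Jm := by
    intro w
    have heq : V (Polynomial.aeval tR P * ((sR - c (q^2) * tR) * (sR - c ((q^2)⁻¹) * tR)))
        = -(Polynomial.aeval T P * ((a*a) • (S*T) - (S-T)*(S-T))) := by
      have h5 : (sR - c (q^2) * tR) * (sR - c ((q^2)⁻¹) * tR)
          = -((a*a) • (sR*tR) - (sR-tR)*(sR-tR)) := by rw [hu]; ring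
      rw [h5]
      simp only [mul_neg, map_neg, map_mul, map_sub, map_smul, hVaeval_t, hVs, hVt]
    rw [heq, neg_smul, h3 w, neg_zero]
  have hzJv : Polynomial.aeval tR P * ((L.map c).map (fun lam => sR - lam)).prod ∈ Jv := by
    have e : ((L.map c).map (fun lam => sR - lam)).prod = Polynomial.aeval sR P := by
      rw [Multiset.map_map, hP, aeval_multiset_prod]
      rfl
    show V _ • v = 0
    rw [e, map_mul, hVaeval_t, hVaeval_s, mul_smul, hL v, smul_zero]
  have hconc := killC2 Jm Jv hJ sR tR (c (q^2)) (c ((q^2)⁻¹)) (L.map c)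
    (Polynomial.aeval tR P) hzJm hzJv
  have hgoal : Polynomial.aeval tR
      (((L + L.map (fun μ => (q^2)⁻¹ * μ) + L.map (fun μ => q^2 * μ)).map
        fun μ => (X:K[X]) - C μ).prod)
      = Polynomial.aeval tR P *
        ((L.map c).map (fun lam => (lam - c (q^2) * tR) * (lam - c ((q^2)⁻¹) * tR))).prod := by
    rw [hP]
    rw [Multiset.map_add, Multiset.map_add, Multiset.prod_add, Multiset.prod_add, map_mul,
      map_mul, aeval_multiset_prod, aeval_multiset_prod, aeval_multiset_prod]
    rw [Multiset.map_map, Multiset.map_map, Multiset.map_map, mul_assoc, ← Multiset.prod_map_mul]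
    congr 1
    refine congrArg Multiset.prod (Multiset.map_congr rfl ?_)
    intro μ _
    simp only [Function.comp]
    have hc2 : (algebraMap K R ((q^2)⁻¹ * μ) : R) = Q'^2 * c μ := by
      rw [map_mul, ← inv_pow]; simp only [map_pow]; rfl
    have hc3 : (algebraMap K R (q^2 * μ) : R) = Q^2 * c μ := by
      rw [map_mul]; simp only [map_pow]; rfl
    rw [hc2, hc3, e1, e2]
    linear_combination (-(Q*Q'+1))*(tR^2 - (c μ)^2) * hQ
  rw [← hVaeval_t, hgoal]
  exact hconc
end StepLemma
section Decomp
variable {K A M : Type} [Field K] [Ring A] [Algebra K A] [AddCommGroup M] [Module A M]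
variable {n : ℕ}

lemma decomp_lemma (x : Fin n → A) (hx : ∀ k l, x k * x l = x l * x k)
    (T : Fin n → Finset K) (hTne : ∀ k, (T k).Nonempty) (m : Fin n → K → ℕ)
    (hF : ∀ (k : Fin n) (v : M),
      Polynomial.aeval (x k) (∏ μ ∈ T k, ((X:K[X]) - C μ)^(m k μ)) • v = 0)
    (v : M) :
    ∃! cdec : (Fin n → K) → M,
      (∀ (i : Fin n → K) (k : Fin n), ∃ N : ℕ, 0 < N ∧
          ((x k - algebraMap K A (i k)) ^ N) • cdec i = 0) ∧
      (∀ i : Fin n → K, i ∉ Fintype.piFinset T → cdec i = 0) ∧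
      ∑ i ∈ Fintype.piFinset T, cdec i = v := by
  classical
  letI R : Subalgebra K A := Algebra.adjoin K (Set.range x)
  letI : CommRing R := Algebra.adjoinCommRingOfComm K (by
    rintro _ ⟨k, rfl⟩ _ ⟨l, rfl⟩; exact hx k l)
  let V := (Algebra.adjoin K (Set.range x)).val
  let xR : Fin n → R := fun k => ⟨x k, Algebra.subset_adjoin ⟨k, rfl⟩⟩
  have hVx : ∀ k, V (xR k) = x k := fun k => rfl
  have hVaeval : ∀ (k : Fin n) (p : K[X]),
      V (Polynomial.aeval (xR k) p) = Polynomial.aeval (x k) p :=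
    fun k p => (Polynomial.aeval_algHom_apply V (xR k) p).symm
  set f : Fin n → K → K[X] := fun k μ => ((X:K[X]) - C μ)^(m k μ) with hfdef
  set F : Fin n → K[X] := fun k => ∏ μ ∈ T k, f k μ with hFdef
  have hXpow : ∀ (k : Fin n) (μ : K) (N : ℕ),
      Polynomial.aeval (x k) (((X:K[X]) - C μ)^N) = (x k - algebraMap K A μ)^N := by
    intro k μ N; rw [map_pow, map_sub, aeval_X, aeval_C]
  have hFkill : ∀ (k : Fin n) (z : R) (w : M),
      V (z * Polynomial.aeval (xR k) (F k)) • w = 0 := by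
    intro k z w
    rw [map_mul, mul_smul, hVaeval, hF k w, smul_zero]
  have hlin : ∀ {μ ν : K}, μ ≠ ν → IsCoprime ((X:K[X]) - C μ) ((X:K[X]) - C ν) :=
    fun h => Polynomial.pairwise_coprime_X_sub_C Function.injective_id h
  have hBez : ∀ k : Fin n, ∃ H : K → K[X],
      ∑ μ ∈ T k, H μ * ∏ ν ∈ T k \ {μ}, f k ν = 1 := by
    intro k
    refine (exists_sum_eq_one_iff_pairwise_coprime (hTne k)).mpr ?_
    intro i j hij
    exact (hlin (fun h => hij (Subtype.ext h))).pow
  choose H hH using hBez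
  set G : Fin n → K → K[X] := fun k μ => ∏ ν ∈ T k \ {μ}, f k ν with hGdef
  have hG_erase : ∀ (k : Fin n) (μ : K), G k μ = ∏ ν ∈ (T k).erase μ, f k ν := by
    intro k μ; rw [hGdef]; simp only [Finset.sdiff_singleton_eq_erase]
  have hEF : ∀ (k : Fin n) (μ : K), μ ∈ T k → f k μ * G k μ = F k := by
    intro k μ h
    rw [hG_erase, hFdef]
    exact Finset.mul_prod_erase _ _ h
  set π : Fin n → K → R := fun k μ =>
    if μ ∈ T k then Polynomial.aeval (xR k) (H k μ * G k μ) else 0 with hπdef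
  have hsum : ∀ k, ∑ μ ∈ T k, π k μ = 1 := by
    intro k
    rw [Finset.sum_congr rfl (fun μ hμ => if_pos hμ), ← map_sum, hH k, map_one]
  -- U1
  have hU1 : ∀ (k : Fin n) (μ : K) (N : ℕ) (w : M), μ ∈ T k →
      ((x k - algebraMap K A μ)^N) • w = 0 →
      Polynomial.aeval (x k) (f k μ) • w = 0 := by
    intro k μ N w hμT hw
    have hcp : IsCoprime (((X:K[X]) - C μ)^N) (G k μ) := by
      rw [hG_erase]
      refine IsCoprime.prod_right fun ν hν => ?_
      exact (hlin (Finset.ne_of_mem_erase hν).symm).pow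
    obtain ⟨u, u', huu⟩ := hcp
    have key : f k μ = (f k μ * u) * ((X:K[X]) - C μ)^N + u' * F k := by
      rw [← hEF k μ hμT]
      calc f k μ = f k μ * (u * ((X:K[X]) - C μ)^N + u' * G k μ) := by rw [huu, mul_one]
        _ = (f k μ * u) * ((X:K[X]) - C μ)^N + u' * (f k μ * G k μ) := by ring
    rw [key, map_add, add_smul, map_mul, mul_smul, hXpow, hw, smul_zero, map_mul, mul_smul]
    have : Polynomial.aeval (x k) (F k) • w = 0 := hF k w
    rw [this, smul_zero, add_zero]
  -- U2
  have hU2 : ∀ (k : Fin n) (μ ν : K) (N : ℕ) (w : M), μ ∈ T k → ν ∈ T k → ν ≠ μ →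
      ((x k - algebraMap K A μ)^N) • w = 0 → V (π k ν) • w = 0 := by
    intro k μ ν N w hμ hν hne hw
    have hsplit : G k ν = f k μ * ∏ ρ ∈ ((T k).erase ν).erase μ, f k ρ := by
      rw [hG_erase]
      exact (Finset.mul_prod_erase _ _ (Finset.mem_erase.mpr ⟨Ne.symm hne, hμ⟩)).symm
    have : π k ν = Polynomial.aeval (xR k)
        ((H k ν * ∏ ρ ∈ ((T k).erase ν).erase μ, f k ρ) * f k μ) := by
      rw [hπdef]; simp only [if_pos hν]
      congr 1
      rw [hsplit]; ring
    rw [this, map_mul, map_mul, mul_smul, hVaeval, hVaeval, hU1 k μ N w hμ hw, smul_zero]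
  -- U3
  have hU3 : ∀ (k : Fin n) (μ : K) (N : ℕ) (w : M), μ ∈ T k →
      ((x k - algebraMap K A μ)^N) • w = 0 → V (π k μ) • w = w := by
    intro k μ N w hμ hw
    have hz : ∀ ν ∈ T k, ν ≠ μ → V (π k ν) • w = 0 :=
      fun ν hν hne => hU2 k μ ν N w hμ hν hne hw
    have e1 : V (π k μ) • w = ∑ ν ∈ T k, V (π k ν) • w := by
      rw [Finset.sum_eq_single μ (fun ν hν hne => hz ν hν hne) (fun h => absurd hμ h)]
    rw [e1, ← Finset.sum_smul, ← map_sum, hsum k, map_one, one_smul]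
  -- the idempotent family
  set e : (Fin n → K) → R := fun i => ∏ k, π k (i k) with hedef
  have he0 : ∀ i : Fin n → K, i ∉ Fintype.piFinset T → e i = 0 := by
    intro i hi
    rw [Fintype.mem_piFinset] at hi
    push_neg at hi
    obtain ⟨k, hk⟩ := hi
    exact Finset.prod_eq_zero (Finset.mem_univ k) (by rw [hπdef]; simp only [if_neg hk])
  have hesum : ∑ i ∈ Fintype.piFinset T, e i = 1 := by
    rw [hedef, ← Finset.prod_univ_sum]
    exact Finset.prod_eq_one fun k _ => hsum k
  refine ⟨fun i => V (e i) • v, ⟨?_, ?_, ?_⟩, ?_⟩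
  · -- (a)
    intro i k
    by_cases hik : i k ∈ T k
    · refine ⟨m k (i k) + 1, Nat.succ_pos _, ?_⟩
      show ((x k - algebraMap K A (i k)) ^ (m k (i k) + 1)) • (V (e i) • v) = 0
      have hsp : (xR k - algebraMap K R (i k))^(m k (i k) + 1) * e i
          = ((Polynomial.aeval (xR k) (((X:K[X]) - C (i k)) * H k (i k))
              * ∏ k' ∈ Finset.univ.erase k, π k' (i k'))) * Polynomial.aeval (xR k) (F k) := by
        have he : e i = π k (i k) * ∏ k' ∈ Finset.univ.erase k, π k' (i k') := by
          rw [hedef]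
          exact (Finset.mul_prod_erase _ _ (Finset.mem_univ k)).symm
        have hx1 : (xR k - algebraMap K R (i k)) = Polynomial.aeval (xR k) ((X:K[X]) - C (i k)) := by
          rw [map_sub, aeval_X, aeval_C]
        have hpoly : ((X:K[X]) - C (i k))^(m k (i k) + 1) * (H k (i k) * G k (i k))
            = (((X:K[X]) - C (i k)) * H k (i k)) * F k := by
          rw [← hEF k (i k) hik, hfdef]
          ring
        rw [he, hπdef]
        simp only [if_pos hik]
        rw [hx1, ← map_pow, ← mul_assoc, ← map_mul, hpoly, map_mul]
        ring
      have hV : (x k - algebraMap K A (i k))^(m k (i k) + 1)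
          = V ((xR k - algebraMap K R (i k))^(m k (i k) + 1)) := by
        rw [map_pow, map_sub, hVx, AlgHom.commutes]
      rw [hV, ← mul_smul, ← map_mul, hsp]
      exact hFkill k _ v
    · refine ⟨1, Nat.one_pos, ?_⟩
      show ((x k - algebraMap K A (i k)) ^ 1) • (V (e i) • v) = 0
      have : e i = 0 := Finset.prod_eq_zero (Finset.mem_univ k) (by rw [hπdef]; simp only [if_neg hik])
      rw [this, map_zero, zero_smul, smul_zero]
  · -- (b)
    intro i hi
    show V (e i) • v = 0
    rw [he0 i hi, map_zero, zero_smul]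
  · -- (c)
    rw [← Finset.sum_smul, ← map_sum, hesum, map_one, one_smul]
  · -- uniqueness
    intro cdec' hcd
    obtain ⟨ha', hb', hc'⟩ := hcd
    funext i
    by_cases hi : i ∈ Fintype.piFinset T
    · have hiT : ∀ k, i k ∈ T k := Fintype.mem_piFinset.mp hi
      have fix : ∀ s : Finset (Fin n), V (∏ k ∈ s, π k (i k)) • cdec' i = cdec' i := by
        intro s
        induction s using Finset.induction_on with
        | empty => rw [Finset.prod_empty, map_one, one_smul]
        | insert k s hk ih =>
          rw [Finset.prod_insert hk, map_mul, mul_smul, ih]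
          obtain ⟨N, hN, hNw⟩ := ha' i k
          exact hU3 k (i k) N (cdec' i) (hiT k) hNw
      have kill : ∀ j ∈ Fintype.piFinset T, j ≠ i → V (e i) • cdec' j = 0 := by
        intro j hj hne
        have hjT : ∀ k, j k ∈ T k := Fintype.mem_piFinset.mp hj
        obtain ⟨k0, hk0⟩ : ∃ k0, i k0 ≠ j k0 := by
          by_contra hcon
          push_neg at hcon
          exact hne (funext fun k => (hcon k).symm)
        have he : e i = (∏ k' ∈ Finset.univ.erase k0, π k' (i k')) * π k0 (i k0) := by
          simp only [hedef]
          rw [← Finset.mul_prod_erase _ _ (Finset.mem_univ k0)]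
          ring
        obtain ⟨N, hN, hNw⟩ := ha' j k0
        rw [he, map_mul, mul_smul, hU2 k0 (j k0) (i k0) N (cdec' j) (hjT k0) (hiT k0) hk0 hNw,
          smul_zero]
      have step : V (e i) • v = cdec' i := by
        calc V (e i) • v = V (e i) • ∑ j ∈ Fintype.piFinset T, cdec' j := by rw [hc']
          _ = ∑ j ∈ Fintype.piFinset T, V (e i) • cdec' j := Finset.smul_sum
          _ = cdec' i := by
              rw [Finset.sum_eq_single i (fun j hj hne => kill j hj hne)
                (fun h => absurd hi h)]
              exact fix Finset.univ
      exact step.symm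
    · rw [hb' i hi, he0 i hi, map_zero, zero_smul]

end Decomp

end Statement8Aux
end PdAW

namespace PdAW

/-- Proposition 3.1.  If `P(X_1) = ∏_{λ∈I}(X_1-λ)^{m(λ)}` acts as `0`
on an `Ĥ(A_n)`-module `M`, then each `X_k` is annihilated by a polynomial with roots in
`I_k = {λq^{2t} : λ ∈ I, |t| ≤ k-1}`, and `M` decomposes as the direct sum of the common
generalized eigenspaces `M_i`, `i ∈ I_1 × ⋯ × I_n`. -/
theorem statement8 {K : Type} [Field K] (q : K) (hq : q ≠ 0) (hq2 : q ^ 2 ≠ 1)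
    (n : ℕ) (h0 : 0 < n)
    (M : Type) [AddCommGroup M] [Module (HeckeA q n) M]
    (I : Finset K) (hI : ∀ lam ∈ I, lam ≠ 0)
    (mm : K → ℕ) (hmm : ∀ lam ∈ I, 0 < mm lam)
    (hP : ∀ v : M,
      polyProd (RingQuot.mkAlgHom K (HARel q n) (aX ⟨0, h0⟩)) I mm • v = 0) :
    (∀ k : Fin n, ∃ mk : K → ℕ, ∀ v : M,
        polyProd (RingQuot.mkAlgHom K (HARel q n) (aX k))
          ((I ×ˢ Finset.Icc (-(k.1 : ℤ)) (k.1 : ℤ)).image fun pr => pr.1 * q ^ (2 * pr.2))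
          mk • v = 0) ∧
    (∀ v : M, ∃! cdec : (Fin n → K) → M,
      (∀ i : Fin n → K, ∀ k : Fin n, ∃ N : ℕ, 0 < N ∧
          ((RingQuot.mkAlgHom K (HARel q n) (aX k) -
            algebraMap K (HeckeA q n) (i k)) ^ N) • cdec i = 0) ∧
      (∀ i : Fin n → K, i ∉ (Fintype.piFinset fun k : Fin n =>
          (I ×ˢ Finset.Icc (-(k.1 : ℤ)) (k.1 : ℤ)).image fun pr => pr.1 * q ^ (2 * pr.2)) →
        cdec i = 0) ∧
      ∑ i ∈ (Fintype.piFinset fun k : Fin n =>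
          (I ×ˢ Finset.Icc (-(k.1 : ℤ)) (k.1 : ℤ)).image fun pr => pr.1 * q ^ (2 * pr.2)),
        cdec i = v)     := by
  classical
  open Polynomial Statement8Aux in
  let x : Fin n → HeckeA q n := fun k => RingQuot.mkAlgHom K (HARel q n) (aX k)
  have hxx : ∀ k l, x k * x l = x l * x k := by
    intro k l
    show RingQuot.mkAlgHom K (HARel q n) (aX k) * RingQuot.mkAlgHom K (HARel q n) (aX l) = _
    rw [← map_mul, ← map_mul]
    exact RingQuot.mkAlgHom_rel K (HARel.Xcomm k l)
  let Tf : ℕ → Finset K := fun k =>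
    (I ×ˢ Finset.Icc (-(k:ℤ)) (k:ℤ)).image fun pr => pr.1 * q ^ (2 * pr.2)
  have hq2pow : ∀ t : ℤ, (q : K) ^ (2*(t-1)) = (q^2)⁻¹ * q ^ (2*t) := by
    intro t
    rw [show 2*(t-1) = 2*t + (-2) by ring, zpow_add₀ hq,
      show ((-2):ℤ) = -(2:ℕ) by norm_num, zpow_neg, zpow_natCast]
    ring
  have hq2pow' : ∀ t : ℤ, (q : K) ^ (2*(t+1)) = q^2 * q ^ (2*t) := by
    intro t
    rw [show 2*(t+1) = 2*t + ((2:ℕ):ℤ) by push_cast; ring, zpow_add₀ hq, zpow_natCast]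
    ring
  have hTmem : ∀ (k:ℕ) (μ : K), μ ∈ Tf k →
      μ ∈ Tf (k+1) ∧ (q^2)⁻¹ * μ ∈ Tf (k+1) ∧ q^2 * μ ∈ Tf (k+1) := by
    intro k μ hμ
    rw [Finset.mem_image] at hμ
    obtain ⟨⟨lam, t⟩, hpr, rfl⟩ := hμ
    rw [Finset.mem_product, Finset.mem_Icc] at hpr
    obtain ⟨hlam, ht⟩ := hpr
    refine ⟨Finset.mem_image.mpr ⟨(lam, t), ?_, rfl⟩,
      Finset.mem_image.mpr ⟨(lam, t-1), ?_, ?_⟩,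
      Finset.mem_image.mpr ⟨(lam, t+1), ?_, ?_⟩⟩
    · rw [Finset.mem_product, Finset.mem_Icc]
      refine ⟨hlam, ?_⟩
      push_cast
      push_cast at ht
      omega
    · rw [Finset.mem_product, Finset.mem_Icc]
      refine ⟨hlam, ?_⟩
      push_cast
      push_cast at ht
      omega
    · show lam * q ^ (2*(t-1)) = (q^2)⁻¹ * (lam * q ^ (2*t))
      rw [hq2pow t]; ring
    · rw [Finset.mem_product, Finset.mem_Icc]
      refine ⟨hlam, ?_⟩
      push_cast
      push_cast at ht
      omega
    · show lam * q ^ (2*(t+1)) = q^2 * (lam * q ^ (2*t))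
      rw [hq2pow' t]; ring
  have part1m : ∀ (k:ℕ) (hk : k < n), ∃ L : Multiset K,
      (∀ μ ∈ L, μ ∈ Tf k) ∧
      (∀ v : M, Polynomial.aeval (x ⟨k, hk⟩)
        ((L.map fun μ => (X:K[X]) - C μ).prod) • v = 0) := by
    intro k
    induction k with
    | zero =>
      intro hk
      refine ⟨I.val.bind fun μ => Multiset.replicate (mm μ) μ, ?_, ?_⟩
      · intro μ hμ
        rw [Multiset.mem_bind] at hμ
        obtain ⟨lam, hlam, hrep⟩ := hμ
        rw [Multiset.eq_of_mem_replicate hrep]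
        refine Finset.mem_image.mpr ⟨(lam, 0), ?_, ?_⟩
        · rw [Finset.mem_product]
          exact ⟨hlam, by simp⟩
        · simp
      · intro v
        have h1 : polyProd (x ⟨0, hk⟩) I mm =
            Polynomial.aeval (x ⟨0, hk⟩)
              (((I.val.bind fun μ => Multiset.replicate (mm μ) μ).map
                fun μ => (X:K[X]) - C μ).prod) := by
          rw [polyProd_eq_aeval, prod_pow_eq_multiset]
        rw [← h1]
        exact hP v
    | succ k ih =>
      intro hk1
      obtain ⟨L, hmem, hann⟩ := ih (Nat.lt_of_succ_lt hk1)
      have hkn1 : k < n - 1 := by omega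
      set c : Fin (n-1) := ⟨k, hkn1⟩ with hcdef
      have hg2 : RingQuot.mkAlgHom K (HARel q n) (ag c) * RingQuot.mkAlgHom K (HARel q n) (ag c)
          = (q - q⁻¹) • RingQuot.mkAlgHom K (HARel q n) (ag c) + 1 := by
        rw [← map_mul, RingQuot.mkAlgHom_rel K (HARel.quad c), map_add, map_smul, map_one]
      have hgsg : RingQuot.mkAlgHom K (HARel q n) (ag c) * x (lo c) *
            RingQuot.mkAlgHom K (HARel q n) (ag c) = x (hi c) := by
        show _ * RingQuot.mkAlgHom K (HARel q n) (aX (lo c)) * _ = _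
        rw [← map_mul, ← map_mul]
        exact RingQuot.mkAlgHom_rel K (HARel.gXg c)
      have hST : x (lo c) * x (hi c) = x (hi c) * x (lo c) := hxx _ _
      have hann' : ∀ v : M, Polynomial.aeval (x (lo c))
          ((L.map fun μ => (X:K[X]) - C μ).prod) • v = 0 := hann
      have hstep := step_lemma q hq (RingQuot.mkAlgHom K (HARel q n) (ag c))
        (x (lo c)) (x (hi c)) hg2 hgsg hST L hann'
      refine ⟨L + L.map (fun μ => (q^2)⁻¹ * μ) + L.map (fun μ => q^2 * μ), ?_, ?_⟩
      · intro μ hμ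
        rw [Multiset.mem_add, Multiset.mem_add] at hμ
        rcases hμ with (hμ | hμ) | hμ
        · exact (hTmem k μ (hmem μ hμ)).1
        · rw [Multiset.mem_map] at hμ
          obtain ⟨ν, hν, rfl⟩ := hμ
          exact (hTmem k ν (hmem ν hν)).2.1
        · rw [Multiset.mem_map] at hμ
          obtain ⟨ν, hν, rfl⟩ := hμ
          exact (hTmem k ν (hmem ν hν)).2.2
      · exact hstep
  have hpart1 : ∀ k : Fin n, ∃ mk : K → ℕ, ∀ v : M,
      polyProd (RingQuot.mkAlgHom K (HARel q n) (aX k))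
        ((I ×ˢ Finset.Icc (-(k.1:ℤ)) (k.1:ℤ)).image fun pr => pr.1 * q ^ (2*pr.2)) mk
        • v = 0 := by
    intro k
    obtain ⟨L, hmem, hann⟩ := part1m k.1 k.2
    refine ⟨fun μ => L.count μ, fun v => ?_⟩
    have h1 : polyProd (x k) (Tf k.1) (fun μ => L.count μ)
        = Polynomial.aeval (x k) ((L.map fun μ => (X:K[X]) - C μ).prod) := by
      rw [polyProd_eq_aeval, count_prod_eq _ _ hmem]
    show polyProd (x k) (Tf k.1) (fun μ => L.count μ) • v = 0
    rw [h1]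
    exact hann v
  refine ⟨hpart1, ?_⟩
  intro v
  by_cases hI0 : I.Nonempty
  · have hTne : ∀ k : Fin n,
        ((I ×ˢ Finset.Icc (-(k.1:ℤ)) (k.1:ℤ)).image
          fun pr => pr.1 * q ^ (2*pr.2)).Nonempty := by
      intro k
      exact Finset.Nonempty.image
        (Finset.Nonempty.product hI0 (Finset.nonempty_Icc.mpr (by omega))) _
    choose m hm using hpart1
    have hF : ∀ (k : Fin n) (w : M),
        Polynomial.aeval (x k)
          (∏ μ ∈ (I ×ˢ Finset.Icc (-(k.1:ℤ)) (k.1:ℤ)).image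
              (fun pr => pr.1 * q ^ (2*pr.2)),
            ((X:K[X]) - C μ)^(m k μ)) • w = 0 := by
      intro k w
      rw [← polyProd_eq_aeval]
      exact hm k w
    exact decomp_lemma x hxx _ hTne m hF v
  · rw [Finset.not_nonempty_iff_eq_empty] at hI0
    subst hI0
    have hM0 : ∀ w : M, w = 0 := by
      intro w
      have h2 := hP w
      rw [show polyProd (RingQuot.mkAlgHom K (HARel q n) (aX ⟨0, h0⟩)) ∅ mm = 1 from
        Finset.noncommProd_empty _ _, one_smul] at h2
      exact h2
    refine ⟨fun _ => 0, ⟨fun i k => ⟨1, Nat.one_pos, smul_zero _⟩, fun _ _ => rfl, ?_⟩, ?_⟩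
    · rw [Finset.sum_const_zero]
      exact (hM0 v).symm
    · intro cdec' _
      funext i
      exact hM0 (cdec' i)


end PdAW
end
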